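/- arXiv:1312.5674 — 5 statements merged into one kernel-verified Lean document; each statement's English description precedes it below -/
import Mathlib

section
/- Continuous Littlewood–Paley decomposition: let χ ∈ C^∞(ℝ^{n+d}) equal 1 in a neighborhood of I = {h=0} and 0 outside a larger neighborhood, and set ψ = −ρχ where ρ = h^j∂_{h^j}. Then for every distribution t and every test function φ vanishing in a neighborhood of I, ⟨t,φ⟩ = ∫₀¹ (dλ/λ) ⟨t ψ_{λ^{-1}}, φ⟩ + ⟨t(1−χ), φ⟩, where ψ_{λ^{-1}}(x,h) = ψ(x, h/λ) and the integrand vanishes for λ below a positive threshold. -/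
open Set MeasureTheory

noncomputable section

abbrev Pt (n d : ℕ) : Type := (Fin n → ℝ) × (Fin d → ℝ)

/-- `t` is a distribution: on each compact it has a finite order estimate. -/
def IsLocDistrib (n d : ℕ) (t : (Pt n d → ℝ) → ℝ) : Prop :=
  ∀ K : Set (Pt n d), IsCompact K → ∃ (C : ℝ) (k : ℕ),
    ∀ φ : Pt n d → ℝ, ContDiff ℝ (⊤ : ℕ∞) φ → tsupport φ ⊆ K →
      ∀ M : ℝ, (∀ i ≤ k, ∀ x, ‖iteratedFDeriv ℝ i φ x‖ ≤ M) → |t φ| ≤ C * M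



section Aux
variable {E : Type} [NormedAddCommGroup E] [NormedSpace ℝ E]

lemma fderiv_comp_const_add {F : Type} [NormedAddCommGroup F] [NormedSpace ℝ F]
    (f : E → F) (c x : E) :
    fderiv ℝ (fun y => f (c + y)) x = fderiv ℝ f (c + x) := by
  by_cases h : DifferentiableAt ℝ f (c + x)
  · have h1 : HasFDerivAt (fun y : E => c + y) (ContinuousLinearMap.id ℝ E) x := by
      simpa using (hasFDerivAt_id x).const_add c
    have := (h.hasFDerivAt.comp x h1)
    simpa [Function.comp_def] using this.fderiv
  · rw [fderiv_zero_of_not_differentiableAt h, fderiv_zero_of_not_differentiableAt]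
    intro hd
    apply h
    have h2 : DifferentiableAt ℝ (fun z : E => (fun y => f (c + y)) (-c + z)) (c + x) := by
      have hd' : DifferentiableAt ℝ (fun y => f (c + y)) (-c + (c + x)) := by
        simpa using hd
      exact hd'.comp _ ((differentiable_id.const_add _).differentiableAt)
    simpa using h2

lemma iteratedFDeriv_comp_const_add {F : Type} [NormedAddCommGroup F] [NormedSpace ℝ F]
    (i : ℕ) (f : E → F) (c : E) (x : E) :
    iteratedFDeriv ℝ i (fun y => f (c + y)) x = iteratedFDeriv ℝ i f (c + x) := by
  induction i generalizing x with
  | zero => ext m; simp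
  | succ i IH =>
    ext m
    rw [iteratedFDeriv_succ_apply_left, iteratedFDeriv_succ_apply_left]
    have h1 : (fun y => iteratedFDeriv ℝ i (fun z => f (c + z)) y)
        = fun y => iteratedFDeriv ℝ i f (c + y) := funext fun y => IH y
    rw [show fderiv ℝ (iteratedFDeriv ℝ i fun y => f (c + y)) x
          = fderiv ℝ (fun y => iteratedFDeriv ℝ i f (c + y)) x by rw [← h1],
      fderiv_comp_const_add (iteratedFDeriv ℝ i f) c x]

end Aux

section Comm
variable {E : Type} [NormedAddCommGroup E] [NormedSpace ℝ E]

lemma fderiv_iteratedFDeriv_apply_comm (i : ℕ) :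
    ∀ {F : Type} [NormedAddCommGroup F] [NormedSpace ℝ F] (W : E → F),
      ContDiff ℝ (⊤ : ℕ∞) W → ∀ (v x : E),
      fderiv ℝ (iteratedFDeriv ℝ i W) x v = iteratedFDeriv ℝ i (fun y => fderiv ℝ W y v) x := by
  induction i with
  | zero =>
    intro F _ _ W hW v x
    ext m
    have h0 : iteratedFDeriv ℝ 0 W = ⇑(continuousMultilinearCurryFin0 ℝ E F).symm ∘ W :=
      iteratedFDeriv_zero_eq_comp
    rw [h0, LinearIsometryEquiv.comp_fderiv]
    simp
  | succ i IH =>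
    intro F _ _ W hW v x
    have hW' : ContDiff ℝ (⊤ : ℕ∞) (fderiv ℝ W) := by
      apply hW.fderiv_right
      exact le_of_eq (by simp)
    have h1 : iteratedFDeriv ℝ (i + 1) W =
        ⇑(continuousMultilinearCurryRightEquiv' ℝ i E F).symm ∘
          iteratedFDeriv ℝ i fun y => fderiv ℝ W y := funext fun y => iteratedFDeriv_succ_eq_comp_right
    have hcf := LinearIsometryEquiv.comp_fderiv
      (iso := (continuousMultilinearCurryRightEquiv' ℝ i E F).symm)
      (f := iteratedFDeriv ℝ i fun y => fderiv ℝ W y) (x := x)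
    rw [h1, hcf]
    have h2 := IH (fderiv ℝ W) hW' v x
    simp only [ContinuousLinearMap.coe_comp', Function.comp_apply]
    rw [h2]
    have h3 : (fun y => fderiv ℝ (fderiv ℝ W) y v) =
        fun y => fderiv ℝ (fun z => fderiv ℝ W z v) y := by
      funext y
      ext w
      have hsym : IsSymmSndFDerivAt ℝ W y :=
        (hW.contDiffAt).isSymmSndFDerivAt (by rw [minSmoothness_of_isRCLikeNormedField]; exact WithTop.coe_le_coe.mpr le_top)
      have h4 : fderiv ℝ (fun z => fderiv ℝ W z v) y = (fderiv ℝ (fderiv ℝ W) y).flip v := by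
        have hc : DifferentiableAt ℝ (fderiv ℝ W) y :=
          (hW'.differentiable (by decide)).differentiableAt
        rw [fderiv_clm_apply hc (differentiableAt_const v)]
        simp
      rw [h4, ContinuousLinearMap.flip_apply]
      exact hsym v w
    rw [h3, iteratedFDeriv_succ_eq_comp_right]
    rfl

end Comm

section Slice
variable {E : Type} [NormedAddCommGroup E] [NormedSpace ℝ E]

lemma iteratedFDeriv_slice (i : ℕ) (W : ℝ × E → ℝ) (hW : ContDiff ℝ (⊤:ℕ∞) W) (s : ℝ) (p : E) :
    iteratedFDeriv ℝ i (fun q => W (s, q)) p =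
      (iteratedFDeriv ℝ i W (s, p)).compContinuousLinearMap
        (fun _ => ContinuousLinearMap.inr ℝ ℝ E) := by
  have h1 : (fun q => W (s, q)) = (fun y => W ((s, (0:E)) + y)) ∘ (ContinuousLinearMap.inr ℝ ℝ E) := by
    funext q
    simp
  have htr : ContDiff ℝ (⊤:ℕ∞) (fun y => W ((s, (0:E)) + y)) :=
    hW.comp (contDiff_const.add contDiff_id)
  rw [h1, ContinuousLinearMap.iteratedFDeriv_comp_right _ htr _
    (by exact_mod_cast (le_top : (i:ℕ∞) ≤ ⊤))]
  congr 1
  have h2 := iteratedFDeriv_comp_const_add i W ((s, (0:E))) (((0:ℝ), p))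
  simpa using h2

lemma iteratedFDeriv_eq_zero_of_zero_on_isOpen {F : Type} [NormedAddCommGroup F]
    [NormedSpace ℝ F] {f : E → F} {U : Set E} (hU : IsOpen U) {x : E} (hx : x ∈ U)
    (h : ∀ y ∈ U, f y = 0) (i : ℕ) : iteratedFDeriv ℝ i f x = 0 := by
  have h1 : iteratedFDeriv ℝ i f x = iteratedFDerivWithin ℝ i f U x :=
    (iteratedFDerivWithin_of_isOpen i hU hx).symm
  rw [h1, iteratedFDerivWithin_congr (f := fun _ => (0:F)) (fun y hy => h y hy) hx,
    iteratedFDerivWithin_of_isOpen i hU hx, iteratedFDeriv_zero_fun]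
  rfl

end Slice

section Key
variable {E : Type} [NormedAddCommGroup E] [NormedSpace ℝ E]

lemma key_hasDerivAt (t : (E → ℝ) →ₗ[ℝ] ℝ) (K : Set E) (hK : IsCompact K)
    (C : ℝ) (k : ℕ)
    (hest : ∀ φ : E → ℝ, ContDiff ℝ (⊤ : ℕ∞) φ → tsupport φ ⊆ K →
      ∀ M : ℝ, (∀ i ≤ k, ∀ x, ‖iteratedFDeriv ℝ i φ x‖ ≤ M) → |t φ| ≤ C * M)
    (W : ℝ × E → ℝ) (hW : ContDiff ℝ (⊤ : ℕ∞) W)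
    (hsupp : ∀ (r : ℝ) (p : E), p ∉ K → W (r, p) = 0) (r : ℝ) :
    HasDerivAt (fun s => t (fun p => W (s, p)))
      (t (fun p => fderiv ℝ W (r, p) ((1:ℝ), (0:E)))) r := by
  have hcoe : ∀ m : ℕ, (m : WithTop ℕ∞) ≤ ((⊤:ℕ∞) : WithTop ℕ∞) :=
    fun m => by exact_mod_cast (le_top : (m:ℕ∞) ≤ ⊤)
  set v₀ : ℝ × E := ((1:ℝ), (0:E)) with hv₀
  set W₁ : ℝ × E → ℝ := fun x => fderiv ℝ W x v₀ with hW₁def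
  have hW₁ : ContDiff ℝ (⊤ : ℕ∞) W₁ :=
    (hW.fderiv_right (le_of_eq (by simp))).clm_apply contDiff_const
  have hKc : IsClosed K := hK.isClosed
  have hUopen : IsOpen ((univ : Set ℝ) ×ˢ Kᶜ) := isOpen_univ.prod hKc.isOpen_compl
  have hWzero : ∀ x ∈ (univ : Set ℝ) ×ˢ Kᶜ, W x = 0 := by
    rintro ⟨a, p⟩ hx
    exact hsupp a p hx.2
  have hsupp₁ : ∀ (a : ℝ) (p : E), p ∉ K → W₁ (a, p) = 0 := by
    intro a p hp
    have hev : W =ᶠ[nhds (a, p)] (fun _ => (0:ℝ)) :=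
      Filter.eventually_of_mem (hUopen.mem_nhds (by simp [hp])) hWzero
    have : fderiv ℝ W (a, p) = fderiv ℝ (fun _ : ℝ × E => (0:ℝ)) (a, p) := hev.fderiv_eq
    simp [hW₁def, this]
  -- slices are smooth with support in K
  have hline : ∀ s : ℝ, ContDiff ℝ (⊤:ℕ∞) (fun p : E => ((s : ℝ), p)) :=
    fun s => contDiff_const.prodMk contDiff_id
  have hWs : ∀ s : ℝ, ContDiff ℝ (⊤:ℕ∞) (fun p => W (s, p)) :=
    fun s => hW.comp (hline s)
  have hW₁s : ∀ s : ℝ, ContDiff ℝ (⊤:ℕ∞) (fun p => W₁ (s, p)) :=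
    fun s => hW₁.comp (hline s)
  have hts : ∀ g : E → ℝ, (∀ p, p ∉ K → g p = 0) → tsupport g ⊆ K := by
    intro g hg
    apply closure_minimal _ hKc
    intro p hp
    by_contra hpK
    exact hp (hg p hpK)
  rw [hasDerivAt_iff_isLittleO, Asymptotics.isLittleO_iff]
  intro ε hε
  set C' : ℝ := max C 1 with hC'
  have hC'pos : 0 < C' := lt_of_lt_of_le one_pos (le_max_right _ _)
  set ε' : ℝ := ε / C' with hε'def
  have hε' : 0 < ε' := div_pos hε hC'pos
  set Δ : ℝ → E → ℝ := fun s q => W (s, q) - W (r, q) - (s - r) • W₁ (r, q) with hΔ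
  have hΔsm : ∀ s, ContDiff ℝ (⊤:ℕ∞) (Δ s) :=
    fun s => ((hWs s).sub (hWs r)).sub ((hW₁s r).const_smul (s - r))
  have hΔsupp : ∀ s, tsupport (Δ s) ⊆ K := by
    intro s
    apply hts
    intro p hp
    simp [hΔ, hsupp s p hp, hsupp r p hp, hsupp₁ r p hp]
  have hΔlin : ∀ s, t (Δ s) =
      t (fun p => W (s, p)) - t (fun p => W (r, p)) - (s - r) • t (fun p => W₁ (r, p)) := by
    intro s
    have : Δ s = (fun p => W (s, p)) - (fun p => W (r, p)) - (s - r) • (fun p => W₁ (r, p)) := rfl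
    rw [this, map_sub, map_sub, _root_.map_smul]
  -- the uniform estimate
  have hmain : ∀ᶠ s in nhds r, ∀ i ∈ Set.Iic k, ∀ p, ‖iteratedFDeriv ℝ i (Δ s) p‖ ≤ ε' * |s - r| := by
    rw [Filter.eventually_all_finite (Set.finite_Iic k)]
    intro i _
    -- setup for fixed i
    set L := ContinuousMultilinearMap.compContinuousLinearMapL (F := ℝ)
      (fun _ : Fin i => ContinuousLinearMap.inr ℝ ℝ E) with hL
    set Φ : ℝ × E → ContinuousMultilinearMap ℝ (fun _ : Fin i => E) ℝ :=
      fun x => L (iteratedFDeriv ℝ i W x) with hΦdef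
    set Ψ : ℝ × E → ContinuousMultilinearMap ℝ (fun _ : Fin i => E) ℝ :=
      fun x => L (iteratedFDeriv ℝ i W₁ x) with hΨdef
    have hslW : ∀ (s : ℝ) (p : E), iteratedFDeriv ℝ i (fun q => W (s, q)) p = Φ (s, p) := by
      intro s p
      rw [iteratedFDeriv_slice i W hW s p]
      exact (ContinuousMultilinearMap.compContinuousLinearMapL_apply _ _).symm
    have hslW₁ : ∀ (s : ℝ) (p : E), iteratedFDeriv ℝ i (fun q => W₁ (s, q)) p = Ψ (s, p) := by
      intro s p
      rw [iteratedFDeriv_slice i W₁ hW₁ s p]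
      exact (ContinuousMultilinearMap.compContinuousLinearMapL_apply _ _).symm
    have hJ : ContDiff ℝ (⊤:ℕ∞) (iteratedFDeriv ℝ i W) :=
      hW.iteratedFDeriv_right (by exact_mod_cast (le_top : ((⊤:ℕ∞) + (i:ℕ∞)) ≤ ⊤))
    have hΦderiv : ∀ (p : E) (s : ℝ), HasDerivAt (fun σ => Φ (σ, p)) (Ψ (s, p)) s := by
      intro p s
      have hline' : HasDerivAt (fun σ : ℝ => ((σ : ℝ), p)) ((1:ℝ), (0:E)) s :=
        (hasDerivAt_id s).prodMk (hasDerivAt_const s p)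
      have hJd : HasFDerivAt (iteratedFDeriv ℝ i W) (fderiv ℝ (iteratedFDeriv ℝ i W) (s, p)) (s, p) :=
        ((hJ.differentiable (by simp)).differentiableAt).hasFDerivAt
      have h1 : HasDerivAt (fun σ : ℝ => iteratedFDeriv ℝ i W (σ, p))
          (fderiv ℝ (iteratedFDeriv ℝ i W) (s, p) v₀) s := hJd.comp_hasDerivAt s hline'
      have h2 : fderiv ℝ (iteratedFDeriv ℝ i W) (s, p) v₀ = iteratedFDeriv ℝ i W₁ (s, p) :=
        fderiv_iteratedFDeriv_apply_comm i W hW v₀ (s, p)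
      have h3 : HasDerivAt (fun σ : ℝ => Φ (σ, p)) (L (iteratedFDeriv ℝ i W₁ (s, p))) s := by
        exact (L.hasFDerivAt (x := iteratedFDeriv ℝ i W (s, p))).comp_hasDerivAt s (h2 ▸ h1)
      exact h3
    have hΨcont : Continuous Ψ :=
      L.continuous.comp (hW₁.continuous_iteratedFDeriv (hcoe i))
    -- uniform continuity on a compact set
    set S : Set (ℝ × E) := Icc (r - 1) (r + 1) ×ˢ K with hS
    have hScomp : IsCompact S := (isCompact_Icc).prod hK
    have hUC := hScomp.uniformContinuousOn_of_continuous hΨcont.continuousOn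
    rcases (Metric.uniformContinuousOn_iff).1 hUC ε' hε' with ⟨δ, hδpos, hδ⟩
    have hball : Metric.ball r (min δ 1) ∈ nhds r :=
      Metric.ball_mem_nhds r (lt_min hδpos one_pos)
    filter_upwards [hball] with s hs
    have hsr : |s - r| < min δ 1 := by
      simpa [Real.dist_eq] using hs
    intro p
    by_cases hp : p ∈ K
    · -- identity for the iterated derivative of Δ s
      have hid : iteratedFDeriv ℝ i (Δ s) p = Φ (s, p) - Φ (r, p) - (s - r) • Ψ (r, p) := by
        have e1 : Δ s = ((fun q => W (s, q)) + (-(fun q => W (r, q)))) + (-((s - r) • (fun q => W₁ (r, q)))) := by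
          funext q
          simp [hΔ, sub_eq_add_neg]
        have c1 : ContDiff ℝ (i : ℕ) ((fun q => W (s, q)) + -(fun q => W (r, q))) := by
          exact ((hWs s).add (hWs r).neg).of_le (hcoe i)
        have c2 : ContDiff ℝ (i : ℕ) (-((s - r) • (fun q => W₁ (r, q)))) := by
          exact (((hW₁s r).const_smul (s-r)).neg).of_le (hcoe i)
        have hA := iteratedFDeriv_add_apply (𝕜 := ℝ) (x := p) c1.contDiffAt c2.contDiffAt
        have hB := iteratedFDeriv_add_apply (𝕜 := ℝ) (x := p)
          (f := fun q => W (s, q)) (g := -(fun q => W (r, q)))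
          (by exact ((hWs s).of_le (hcoe i)).contDiffAt) (by exact ((hWs r).neg.of_le (hcoe i)).contDiffAt)
        have hC := iteratedFDeriv_neg_apply (𝕜 := ℝ) (x := p) (i := i) (f := fun q => W (r, q))
        have hD := iteratedFDeriv_neg_apply (𝕜 := ℝ) (x := p) (i := i)
          (f := (s - r) • (fun q => W₁ (r, q)))
        have hE := iteratedFDeriv_const_smul_apply (𝕜 := ℝ) (x := p)
          ((hW₁s r).of_le (hcoe i)).contDiffAt (a := s - r)
        rw [e1, hA, hB, hC, hD, hE, hslW s p, hslW r p, hslW₁ r p]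
        abel
      rw [hid]
      -- mean value estimate
      have hmem : ∀ σ ∈ uIcc r s, (σ, p) ∈ S := by
        intro σ hσ
        have h1 : |σ - r| ≤ |s - r| := abs_sub_left_of_mem_uIcc hσ
        have h2 : |σ - r| ≤ 1 := le_of_lt (lt_of_le_of_lt h1 (lt_of_lt_of_le hsr (min_le_right _ _)))
        constructor
        · constructor
          · linarith [abs_le.1 h2]
          · linarith [abs_le.1 h2]
        · exact hp
      have hrS : (r, p) ∈ S := ⟨⟨by linarith, by linarith⟩, hp⟩
      have hbound : ∀ σ ∈ uIcc r s, ‖Ψ (σ, p) - Ψ (r, p)‖ ≤ ε' := by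
        intro σ hσ
        have hdist : dist ((σ, p) : ℝ × E) ((r, p) : ℝ × E) < δ := by
          have h1 : |σ - r| ≤ |s - r| := abs_sub_left_of_mem_uIcc hσ
          have h2 : dist σ r < δ := by
            rw [Real.dist_eq]
            exact lt_of_le_of_lt h1 (lt_of_lt_of_le hsr (min_le_left _ _))
          rw [Prod.dist_eq]
          simp only [dist_self]
          exact max_lt h2 hδpos
        have := hδ (σ, p) (hmem σ hσ) (r, p) hrS hdist
        rw [dist_eq_norm] at this
        exact le_of_lt this
      have hMVT := Convex.norm_image_sub_le_of_norm_hasDerivWithin_le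
        (f := fun σ => Φ (σ, p) - σ • Ψ (r, p))
        (f' := fun σ => Ψ (σ, p) - Ψ (r, p)) (C := ε') (s := uIcc r s)
        (fun σ _ => by
          have hsm : HasDerivAt (fun y : ℝ => y • Ψ (r, p)) (Ψ (r, p)) σ := by
            simpa using (hasDerivAt_id σ).smul_const (Ψ (r, p))
          exact ((hΦderiv p σ).sub hsm).hasDerivWithinAt)
        hbound (convex_uIcc r s) left_mem_uIcc right_mem_uIcc
      have heq : (Φ (s, p) - s • Ψ (r, p)) - (Φ (r, p) - r • Ψ (r, p))
          = Φ (s, p) - Φ (r, p) - (s - r) • Ψ (r, p) := by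
        module
      rw [heq] at hMVT
      calc ‖Φ (s, p) - Φ (r, p) - (s - r) • Ψ (r, p)‖ ≤ ε' * ‖s - r‖ := hMVT
        _ = ε' * |s - r| := by rw [Real.norm_eq_abs]
    · -- p outside K : everything vanishes
      have hzero : iteratedFDeriv ℝ i (Δ s) p = 0 := by
        apply iteratedFDeriv_eq_zero_of_zero_on_isOpen hKc.isOpen_compl hp _ i
        intro q hq
        simp [hΔ, hsupp s q hq, hsupp r q hq, hsupp₁ r q hq]
      rw [hzero]
      simp only [norm_zero]
      positivity
  -- conclude
  filter_upwards [hmain] with s hs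
  have hest' := hest (Δ s) (hΔsm s) (hΔsupp s) (ε' * |s - r|) (fun i hi p => hs i hi p)
  have h1 : t (fun p => W (s, p)) - t (fun p => W (r, p)) - (s - r) • t (fun p => W₁ (r, p))
      = t (Δ s) := (hΔlin s).symm
  rw [Real.norm_eq_abs, Real.norm_eq_abs]
  calc |t (fun p => W (s, p)) - t (fun p => W (r, p)) - (s - r) • t (fun p => W₁ (r, p))|
      = |t (Δ s)| := by rw [h1]
    _ ≤ C * (ε' * |s - r|) := hest'
    _ ≤ C' * (ε' * |s - r|) := by
        apply mul_le_mul_of_nonneg_right (le_max_left _ _)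
        positivity
    _ = ε * |s - r| := by
        rw [hε'def]
        field_simp

end Key

/-- Continuous Littlewood–Paley decomposition: for `ψ = −ρχ` and `φ` vanishing in a
neighborhood of `I = {h = 0}`,
`⟨t,φ⟩ = ∫₀¹ (dλ/λ) ⟨t ψ_{λ^{-1}}, φ⟩ + ⟨t(1−χ), φ⟩`, the integrand vanishing for small `λ`. -/
theorem stmt6 (n d : ℕ)
    (χ : Pt n d → ℝ) (hχsm : ContDiff ℝ (⊤ : ℕ∞) χ)
    (hχ : ∀ K : Set (Fin n → ℝ), IsCompact K → ∃ a b : ℝ, 0 < a ∧ a < b ∧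
      (∀ p : Pt n d, p.1 ∈ K → ‖p.2‖ ≤ a → χ p = 1) ∧
      (∀ p : Pt n d, p.1 ∈ K → b ≤ ‖p.2‖ → χ p = 0))
    (ψ : Pt n d → ℝ)
    (hψ : ∀ p : Pt n d, ψ p = -(∑ j, p.2 j * fderiv ℝ χ p ((0, Pi.single j 1) : Pt n d)))
    (t : (Pt n d → ℝ) →ₗ[ℝ] ℝ) (ht : IsLocDistrib n d (fun φ => t φ))
    (φ : Pt n d → ℝ) (hφsm : ContDiff ℝ (⊤ : ℕ∞) φ) (hφc : HasCompactSupport φ)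
    (hφ0 : ∃ δ > (0:ℝ), ∀ p : Pt n d, ‖p.2‖ ≤ δ → φ p = 0) :
    (∃ δ > (0:ℝ), ∀ l ∈ Set.Ioc (0:ℝ) 1, l ≤ δ →
        t (fun p => ψ (p.1, l⁻¹ • p.2) * φ p) = 0)
    ∧ t φ = (∫ l in Set.Ioc (0:ℝ) 1, t (fun p => ψ (p.1, l⁻¹ • p.2) * φ p) / l)
        + t (fun p => (1 - χ p) * φ p) := by
  obtain ⟨δ₀, hδ₀pos, hδ₀⟩ := hφ0
  set K₀ : Set (Pt n d) := tsupport φ with hK₀def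
  have hK₀ : IsCompact K₀ := hφc
  obtain ⟨R, hR⟩ := hK₀.isBounded.subset_closedBall 0
  obtain ⟨a, b, ha, hab, hχ1, hχ0⟩ :=
    hχ (Metric.closedBall 0 (R + 1)) (isCompact_closedBall _ _)
  have hb : 0 < b := ha.trans hab
  have hχzero : ∀ p : Pt n d, ‖p.1‖ ≤ R + 1 → b ≤ ‖p.2‖ → χ p = 0 :=
    fun p h1 h2 => hχ0 p (mem_closedBall_zero_iff.mpr h1) h2
  have hψzero : ∀ p : Pt n d, ‖p.1‖ < R + 1 → b < ‖p.2‖ → ψ p = 0 := by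
    intro p h1 h2
    have hU : IsOpen {x : Pt n d | ‖x.1‖ < R + 1 ∧ b < ‖x.2‖} :=
      (isOpen_lt (continuous_fst.norm) continuous_const).inter
        (isOpen_lt continuous_const (continuous_snd.norm))
    have hev : χ =ᶠ[nhds p] fun _ => (0:ℝ) :=
      Filter.eventually_of_mem (hU.mem_nhds ⟨h1, h2⟩)
        (fun q hq => hχzero q (le_of_lt hq.1) (le_of_lt hq.2))
    have hfz : fderiv ℝ χ p = 0 := by
      rw [hev.fderiv_eq]
      exact fderiv_const_apply 0
    rw [hψ p, hfz]
    simp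
  have hsupp_mem : ∀ p : Pt n d, φ p ≠ 0 → ‖p.1‖ ≤ R ∧ δ₀ < ‖p.2‖ := by
    intro p hp
    constructor
    · have hmem : p ∈ K₀ := subset_closure (by exact hp)
      have h2 := hR hmem
      rw [mem_closedBall_zero_iff] at h2
      exact (norm_fst_le p).trans h2
    · by_contra h
      push_neg at h
      exact hp (hδ₀ p h)
  have hb' : (0:ℝ) < δ₀ / b := div_pos hδ₀pos hb
  have hvanish : ∀ l : ℝ, 0 < l → l ≤ δ₀ / b →
      (fun p : Pt n d => ψ (p.1, l⁻¹ • p.2) * φ p) = (fun _ => (0:ℝ)) := by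
    intro l hl hlb
    funext p
    by_cases hp : φ p = 0
    · rw [hp, mul_zero]
    · obtain ⟨h1, h2⟩ := hsupp_mem p hp
      have hlb' : l * b ≤ δ₀ := (le_div_iff₀ hb).mp hlb
      have h3 : b < ‖l⁻¹ • p.2‖ := by
        rw [norm_smul, Real.norm_eq_abs, abs_inv, abs_of_pos hl, inv_mul_eq_div, lt_div_iff₀ hl]
        nlinarith
      rw [hψzero (p.1, l⁻¹ • p.2) (by simpa using lt_of_le_of_lt h1 (by linarith)) h3, zero_mul]
  have hχvanish : ∀ l : ℝ, 0 < l → l ≤ δ₀ / b →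
      (fun p : Pt n d => χ (p.1, l⁻¹ • p.2) * φ p) = (fun _ => (0:ℝ)) := by
    intro l hl hlb
    funext p
    by_cases hp : φ p = 0
    · rw [hp, mul_zero]
    · obtain ⟨h1, h2⟩ := hsupp_mem p hp
      have hlb' : l * b ≤ δ₀ := (le_div_iff₀ hb).mp hlb
      have h3 : b < ‖l⁻¹ • p.2‖ := by
        rw [norm_smul, Real.norm_eq_abs, abs_inv, abs_of_pos hl, inv_mul_eq_div, lt_div_iff₀ hl]
        nlinarith
      rw [hχzero (p.1, l⁻¹ • p.2) (by simpa using le_trans h1 (by linarith)) (le_of_lt h3),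
        zero_mul]
  constructor
  · refine ⟨δ₀ / b, hb', fun l hl hld => ?_⟩
    rw [hvanish l hl.1 hld]
    exact map_zero t
  -- main identity
  · set V : ℝ × Pt n d → ℝ := fun x => χ (x.2.1, x.1 • x.2.2) * φ x.2 with hVdef
    have hinner : ContDiff ℝ (⊤:ℕ∞) (fun x : ℝ × Pt n d => ((x.2.1, x.1 • x.2.2) : Pt n d)) :=
      (contDiff_snd.fst).prodMk (contDiff_fst.smul contDiff_snd.snd)
    have hVsm : ContDiff ℝ (⊤:ℕ∞) V := (hχsm.comp hinner).mul (hφsm.comp contDiff_snd)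
    have hVsupp : ∀ (r : ℝ) (p : Pt n d), p ∉ K₀ → V (r, p) = 0 := by
      intro r p hp
      have : φ p = 0 := image_eq_zero_of_notMem_tsupport hp
      simp [hVdef, this]
    obtain ⟨C, k, hest⟩ := ht K₀ hK₀
    set V₁ : ℝ × Pt n d → ℝ := fun x => fderiv ℝ V x ((1:ℝ), (0 : Pt n d)) with hV₁def
    have hV₁sm : ContDiff ℝ (⊤:ℕ∞) V₁ :=
      (hVsm.fderiv_right (le_of_eq (by simp))).clm_apply contDiff_const
    have hV₁supp : ∀ (r : ℝ) (p : Pt n d), p ∉ K₀ → V₁ (r, p) = 0 := by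
      intro r p hp
      have hUo : IsOpen ((univ : Set ℝ) ×ˢ K₀ᶜ) := isOpen_univ.prod hK₀.isClosed.isOpen_compl
      have hev : V =ᶠ[nhds (r, p)] fun _ => (0:ℝ) :=
        Filter.eventually_of_mem (hUo.mem_nhds (by simp [hp]))
          (fun x hx => hVsupp x.1 x.2 hx.2)
      have : fderiv ℝ V (r, p) = 0 := by
        rw [hev.fderiv_eq]
        exact fderiv_const_apply 0
      simp [hV₁def, this]
    have hG : ∀ rr : ℝ, HasDerivAt (fun s => t (fun p => V (s, p)))
        (t (fun p => V₁ (rr, p))) rr :=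
      fun rr => key_hasDerivAt t K₀ hK₀ C k hest V hVsm hVsupp rr
    have hG' : Continuous (fun rr : ℝ => t (fun p => V₁ (rr, p))) := by
      rw [continuous_iff_continuousAt]
      intro rr
      exact (key_hasDerivAt t K₀ hK₀ C k hest V₁ hV₁sm hV₁supp rr).continuousAt
    -- pointwise derivative formula
    have hPW : ∀ (m : ℝ) (p : Pt n d),
        V₁ (m, p) = (fderiv ℝ χ (p.1, m • p.2)) (((0 : Fin n → ℝ), p.2) : Pt n d) * φ p := by
      intro m p
      have hline1 : HasDerivAt (fun r : ℝ => ((p.1, r • p.2) : Pt n d))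
          ((((0 : Fin n → ℝ), p.2)) : Pt n d) m := by
        have h1 : HasDerivAt (fun r : ℝ => r • p.2) p.2 m := by
          simpa using (hasDerivAt_id m).smul_const p.2
        exact (hasDerivAt_const m p.1).prodMk h1
      have hχd : HasFDerivAt χ (fderiv ℝ χ (p.1, m • p.2)) (p.1, m • p.2) :=
        ((hχsm.differentiable (by decide)).differentiableAt).hasFDerivAt
      have hd1 : HasDerivAt (fun r : ℝ => V (r, p))
          (fderiv ℝ χ (p.1, m • p.2) (((0 : Fin n → ℝ), p.2) : Pt n d) * φ p) m :=
        (hχd.comp_hasDerivAt m hline1).mul_const (φ p)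
      have hline2 : HasDerivAt (fun r : ℝ => ((r, p) : ℝ × Pt n d)) ((1:ℝ), (0 : Pt n d)) m :=
        (hasDerivAt_id m).prodMk (hasDerivAt_const m p)
      have hVd : HasFDerivAt V (fderiv ℝ V (m, p)) (m, p) :=
        ((hVsm.differentiable (by decide)).differentiableAt).hasFDerivAt
      have hd2 : HasDerivAt (fun r : ℝ => V (r, p)) (V₁ (m, p)) m :=
        by have := hVd.comp_hasDerivAt m hline2; exact this
      exact hd2.unique hd1
    have hψV : ∀ (m : ℝ) (p : Pt n d), ψ (p.1, m • p.2) * φ p = (-m) * V₁ (m, p) := by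
      intro m p
      have hsum : (((0 : Fin n → ℝ), p.2) : Pt n d)
          = ∑ j : Fin d, p.2 j • (((0 : Fin n → ℝ), (Pi.single j 1 : Fin d → ℝ)) : Pt n d) := by
        have h2 : p.2 = ∑ j : Fin d, p.2 j • (Pi.single j 1 : Fin d → ℝ) := by
          funext j'
          simp [Finset.sum_apply, Pi.single_apply, mul_ite]
        rw [Prod.ext_iff]
        constructor
        · rw [Prod.fst_sum]
          simp
        · rw [Prod.snd_sum]
          simpa using h2
      have hDsum : fderiv ℝ χ (p.1, m • p.2) (((0 : Fin n → ℝ), p.2) : Pt n d)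
          = ∑ j : Fin d, p.2 j * fderiv ℝ χ (p.1, m • p.2) (((0, Pi.single j 1)) : Pt n d) := by
        rw [hsum, map_sum]
        exact Finset.sum_congr rfl fun j _ => by
          rw [(fderiv ℝ χ (p.1, m • p.2)).map_smul, smul_eq_mul]
      rw [hPW m p, hψ ((p.1, m • p.2) : Pt n d), hDsum]
      have hq2 : ∀ j : Fin d, (m • p.2) j = m * p.2 j := fun j => rfl
      simp only [hq2]
      rw [show (∑ j : Fin d, m * p.2 j *
          fderiv ℝ χ (p.1, m • p.2) (((0, Pi.single j 1)) : Pt n d))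
          = m * ∑ j : Fin d, p.2 j *
            fderiv ℝ χ (p.1, m • p.2) (((0, Pi.single j 1)) : Pt n d) by
        rw [Finset.mul_sum]
        apply Finset.sum_congr rfl
        intros
        ring]
      ring
    -- the fundamental theorem of calculus part
    set c : ℝ := min (δ₀ / b) 1 with hcdef
    have hc0 : 0 < c := lt_min hb' one_pos
    have hc1 : c ≤ 1 := min_le_right _ _
    have hcb : c ≤ δ₀ / b := min_le_left _ _
    set F : ℝ → ℝ := fun l => t (fun p => V (l⁻¹, p)) with hFdef
    set f' : ℝ → ℝ := fun l => t (fun p : Pt n d => ψ (p.1, l⁻¹ • p.2) * φ p) / l with hf'def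
    have hderiv_eq : ∀ l : ℝ, l ≠ 0 →
        f' l = t (fun p => V₁ (l⁻¹, p)) * (-(l^2)⁻¹) := by
      intro l hl
      have h3 : (fun p : Pt n d => ψ (p.1, l⁻¹ • p.2) * φ p)
          = (-(l⁻¹)) • (fun p => V₁ (l⁻¹, p)) := by
        funext p
        rw [hψV l⁻¹ p]
        simp [smul_eq_mul]
      have h4 : t ((-(l⁻¹)) • (fun p => V₁ (l⁻¹, p))) = (-(l⁻¹)) * t (fun p => V₁ (l⁻¹, p)) := by
        rw [LinearMap.map_smul, smul_eq_mul]
      simp only [hf'def, h3, h4]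
      rw [div_eq_mul_inv, sq, mul_inv]
      ring
    have hF : ∀ l : ℝ, l ≠ 0 → HasDerivAt F (f' l) l := by
      intro l hl
      have h1 : HasDerivAt F (t (fun p => V₁ (l⁻¹, p)) * (-(l^2)⁻¹)) l :=
        HasDerivAt.comp l (hG l⁻¹) (hasDerivAt_inv hl)
      rw [hderiv_eq l hl]
      exact h1
    have hne : ∀ x ∈ Icc c 1, x ≠ (0:ℝ) := fun x hx => ne_of_gt (lt_of_lt_of_le hc0 hx.1)
    have huIcc : uIcc c 1 = Icc c 1 := uIcc_of_le hc1
    have hf'cont : ContinuousOn f' (uIcc c 1) := by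
      rw [huIcc]
      have hg : ContinuousOn (fun l : ℝ => t (fun p => V₁ (l⁻¹, p)) * (-(l^2)⁻¹)) (Icc c 1) := by
        apply ContinuousOn.mul
        · exact hG'.comp_continuousOn (continuousOn_id.inv₀ hne)
        · exact (((continuousOn_id.pow 2).inv₀
            (fun x hx => pow_ne_zero 2 (hne x hx))).neg)
      exact hg.congr (fun l hl => hderiv_eq l (hne l hl))
    have hInt : IntervalIntegrable f' MeasureTheory.volume c 1 := hf'cont.intervalIntegrable
    have hFTC : ∫ l in c..1, f' l = F 1 - F c :=
      intervalIntegral.integral_eq_sub_of_hasDerivAt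
        (fun l hl => hF l (hne l (huIcc ▸ hl))) hInt
    have hF1 : F 1 = t (fun p => χ p * φ p) := by
      show t (fun p => V ((1:ℝ)⁻¹, p)) = t (fun p => χ p * φ p)
      refine congrArg (fun g : Pt n d → ℝ => t g) (funext fun p => ?_)
      simp [hVdef]
    have hFc : F c = 0 := by
      have h0' : (fun p : Pt n d => V (c⁻¹, p)) = (fun _ => (0:ℝ)) := by
        funext p
        exact congrFun (hχvanish c hc0 hcb) p
      rw [hFdef]
      simp only [h0']
      exact map_zero t
    have hIoc : (∫ l in Set.Ioc (0:ℝ) 1, f' l) = t (fun p => χ p * φ p) := by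
      have hzero : ∀ l ∈ Set.Ioc (0:ℝ) c, f' l = 0 := by
        intro l hl
        show t (fun p : Pt n d => ψ (p.1, l⁻¹ • p.2) * φ p) / l = 0
        rw [hvanish l hl.1 (le_trans hl.2 hcb),
          show (fun _ : Pt n d => (0:ℝ)) = 0 from rfl, map_zero, zero_div]
      have hIoc2 : MeasureTheory.IntegrableOn f' (Set.Ioc c 1) MeasureTheory.volume :=
        (intervalIntegrable_iff_integrableOn_Ioc_of_le hc1).mp hInt
      have hIoc1 : MeasureTheory.IntegrableOn f' (Set.Ioc (0:ℝ) c) MeasureTheory.volume := by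
        rw [integrableOn_congr_fun hzero measurableSet_Ioc]
        exact integrableOn_zero
      rw [show Set.Ioc (0:ℝ) 1 = Set.Ioc 0 c ∪ Set.Ioc c 1 from
          (Set.Ioc_union_Ioc_eq_Ioc (le_of_lt hc0) hc1).symm,
        MeasureTheory.setIntegral_union (Set.Ioc_disjoint_Ioc_of_le le_rfl) measurableSet_Ioc hIoc1 hIoc2,
        MeasureTheory.setIntegral_congr_fun measurableSet_Ioc hzero]
      simp only [MeasureTheory.integral_zero, zero_add]
      rw [← intervalIntegral.integral_of_le hc1, hFTC, hF1, hFc, sub_zero]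
    have hsplit : φ = (fun p => χ p * φ p) + (fun p => (1 - χ p) * φ p) := by
      funext p
      simp only [Pi.add_apply]
      ring
    calc t φ = t ((fun p => χ p * φ p) + (fun p => (1 - χ p) * φ p)) := by rw [← hsplit]
      _ = t (fun p => χ p * φ p) + t (fun p => (1 - χ p) * φ p) := map_add t _ _
      _ = (∫ l in Set.Ioc (0:ℝ) 1, f' l) + t (fun p => (1 - χ p) * φ p) := by rw [hIoc]
end
end

section
/- The soft landing condition is equivalent to the conormal landing of scaled wave front sets: let Γ_M(WF(t)) be the union of all orbits of the lifted scaling flow (x,h;k,ξ) ↦ (x,λh;k,λ^{-1}ξ), λ ∈ (0,T), passing through WF(t), restricted to a ρ-convex set. Then the closure of Γ_M(WF(t)) over I = {h=0} is contained in the conormal C = {(x,0;0,ξ):ξ≠0} if and only if WF(t) satisfies the soft landing condition: there exist ε > 0 and δ > 0 such that WF(t) restricted to {|h|≤ε} is contained in {|k| ≤ δ|h||ξ|}. -/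
open Set

noncomputable section

/-- The union of the orbits of the lifted scaling flow
`(x,h;k,ξ) ↦ (x,λh;k,λ^{-1}ξ)`, `λ ∈ (0,∞)`, through the points of `W` lying in the
`ρ`-convex region `{‖h‖ ≤ ε}`. -/
def flowOrbitsSL (n d : ℕ) (W : Set (Pt n d × Pt n d)) (ε : ℝ) :
    Set (Pt n d × Pt n d) :=
  {v | ∃ w ∈ W, ‖w.1.2‖ ≤ ε ∧ ∃ l : ℝ, 0 < l ∧
        v = ((w.1.1, l • w.1.2), (w.2.1, l⁻¹ • w.2.2))}

/-- The closure of `Γ_M(WF(t))` over `I = {h = 0}` is contained in the conormal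
`C = {(x,0;0,ξ) : ξ ≠ 0}` iff `WF(t)` satisfies the soft landing condition
`∃ ε, δ > 0 : WF(t)|_{‖h‖ ≤ ε} ⊆ {‖k‖ ≤ δ‖h‖‖ξ‖}`. -/
theorem stmt12 (n d : ℕ) (K : Set (Fin n → ℝ)) (hK : IsCompact K)
    (W : Set (Pt n d × Pt n d))
    (hbase : ∀ w ∈ W, w.1.1 ∈ K ∧ w.1.2 ≠ 0 ∧ w.2 ≠ 0)
    (hconic : ∀ w ∈ W, ∀ c : ℝ, 0 < c → (w.1, c • w.2) ∈ W) :
    (∃ ε > (0:ℝ),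
      closure (flowOrbitsSL n d W ε) ∩ {v : Pt n d × Pt n d | v.1.2 = 0 ∧ v.2 ≠ 0}
        ⊆ {v : Pt n d × Pt n d | v.1.2 = 0 ∧ v.2.1 = 0 ∧ v.2.2 ≠ 0})
    ↔ (∃ ε > (0:ℝ), ∃ δ > (0:ℝ), ∀ w ∈ W, ‖w.1.2‖ ≤ ε →
        ‖w.2.1‖ ≤ δ * ‖w.1.2‖ * ‖w.2.2‖) := by
  constructor
  · -- closure condition → soft landing
    rintro ⟨ε, hε, hsub⟩
    by_contra hns
    push_neg at hns
    have H : ∀ m : ℕ, ∃ w, w ∈ W ∧ ‖w.1.2‖ ≤ min ε (1/((m:ℝ)+1)) ∧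
        ((m:ℝ)+1) * ‖w.1.2‖ * ‖w.2.2‖ < ‖w.2.1‖ := by
      intro m
      obtain ⟨w, hw, h1, h2⟩ := hns (min ε (1/((m:ℝ)+1)))
        (lt_min hε (by positivity)) ((m:ℝ)+1) (by positivity)
      exact ⟨w, hw, h1, h2⟩
    choose w hwW hwε hwk using H
    -- basic facts
    have hh : ∀ m, (0:ℝ) < ‖(w m).1.2‖ := fun m =>
      norm_pos_iff.mpr (hbase (w m) (hwW m)).2.1
    have hk : ∀ m, (0:ℝ) < ‖(w m).2.1‖ := fun m =>
      lt_of_le_of_lt (by positivity) (hwk m)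
    set s : ℕ → ℝ := fun m => Real.sqrt ((m:ℝ)+1) with hs_def
    have hs : ∀ m, (0:ℝ) < s m := fun m => Real.sqrt_pos.mpr (by positivity)
    have hss : ∀ m, s m * s m = (m:ℝ)+1 := fun m => Real.mul_self_sqrt (by positivity)
    set c : ℕ → ℝ := fun m => ‖(w m).2.1‖⁻¹ with hc_def
    have hc : ∀ m, (0:ℝ) < c m := fun m => inv_pos.mpr (hk m)
    set lam : ℕ → ℝ := fun m => (s m * ‖(w m).1.2‖)⁻¹ with hlam_def
    have hlam : ∀ m, (0:ℝ) < lam m := fun m => inv_pos.mpr (mul_pos (hs m) (hh m))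
    -- the orbit points
    set v : ℕ → Pt n d × Pt n d := fun m =>
      (((w m).1.1, lam m • (w m).1.2),
       (c m • (w m).2.1, (lam m)⁻¹ • (c m • (w m).2.2))) with hv_def
    have hvmem : ∀ m, v m ∈ flowOrbitsSL n d W ε := by
      intro m
      refine ⟨((w m).1, c m • (w m).2), hconic (w m) (hwW m) (c m) (hc m),
        le_trans (hwε m) (min_le_left _ _), lam m, hlam m, ?_⟩
      simp [hv_def, Prod.smul_def]
    -- norms of the scaled components
    have hA : ∀ m, ‖lam m • (w m).1.2‖ = (s m)⁻¹ := by
      intro m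
      rw [norm_smul, Real.norm_eq_abs, abs_of_pos (hlam m)]
      simp only [hlam_def]
      rw [mul_inv, mul_assoc, inv_mul_cancel₀ (hh m).ne', mul_one]
    have hB : ∀ m, ‖(lam m)⁻¹ • (c m • (w m).2.2)‖ ≤ (s m)⁻¹ := by
      intro m
      rw [norm_smul, norm_smul, Real.norm_eq_abs, Real.norm_eq_abs,
        abs_of_pos (inv_pos.mpr (hlam m)), abs_of_pos (hc m)]
      simp only [hlam_def, hc_def, inv_inv]
      have h1 : s m * ‖(w m).1.2‖ * (‖(w m).2.1‖⁻¹ * ‖(w m).2.2‖)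
          = (s m * ‖(w m).1.2‖ * ‖(w m).2.2‖) / ‖(w m).2.1‖ := by ring
      rw [h1, inv_eq_one_div, div_le_div_iff₀ (hk m) (hs m)]
      have e : s m * ‖(w m).1.2‖ * ‖(w m).2.2‖ * s m
          = ((m:ℝ)+1) * ‖(w m).1.2‖ * ‖(w m).2.2‖ := by rw [← hss m]; ring
      rw [e, one_mul]
      exact (hwk m).le
    -- compactness: extract convergent subsequence of (x, k/‖k‖)
    have hsphere : ∀ m, c m • (w m).2.1 ∈ Metric.sphere (0 : Fin n → ℝ) 1 := by
      intro m
      rw [mem_sphere_zero_iff_norm, norm_smul, Real.norm_eq_abs, abs_of_pos (hc m),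
        hc_def]
      exact inv_mul_cancel₀ (hk m).ne'
    have hcomp : IsCompact (K ×ˢ Metric.sphere (0 : Fin n → ℝ) 1) :=
      hK.prod (isCompact_sphere 0 1)
    have humem : ∀ m, ((w m).1.1, c m • (w m).2.1) ∈ K ×ˢ Metric.sphere (0 : Fin n → ℝ) 1 :=
      fun m => ⟨(hbase (w m) (hwW m)).1, hsphere m⟩
    obtain ⟨⟨x₀, k₀⟩, hx₀, φ, hφ, hlim⟩ := hcomp.tendsto_subseq humem
    -- (s m)⁻¹ → 0
    have hNs : Filter.Tendsto (fun m : ℕ => (s m)⁻¹) Filter.atTop (nhds 0) := by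
      have h1 : Filter.Tendsto (fun m : ℕ => ((m:ℝ)+1)⁻¹) Filter.atTop (nhds 0) := by
        simpa [one_div] using (tendsto_one_div_add_atTop_nhds_zero_nat :
          Filter.Tendsto (fun n : ℕ => 1 / ((n : ℝ) + 1)) Filter.atTop (nhds 0))
      have h2 := (Real.continuous_sqrt.tendsto 0).comp h1
      rw [Real.sqrt_zero] at h2
      have h3 : (fun m : ℕ => (s m)⁻¹) = fun m : ℕ => Real.sqrt (((m:ℝ)+1)⁻¹) := by
        funext m
        rw [hs_def]
        exact (Real.sqrt_inv _).symm
      rw [h3]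
      exact h2
    have hNsφ : Filter.Tendsto (fun j : ℕ => (s (φ j))⁻¹) Filter.atTop (nhds 0) :=
      hNs.comp hφ.tendsto_atTop
    -- limits of components along φ
    have hxlim : Filter.Tendsto (fun j => (w (φ j)).1.1) Filter.atTop (nhds x₀) :=
      (continuous_fst.tendsto _).comp hlim
    have hklim : Filter.Tendsto (fun j => c (φ j) • (w (φ j)).2.1) Filter.atTop (nhds k₀) :=
      (continuous_snd.tendsto _).comp hlim
    have hhlim : Filter.Tendsto (fun j => lam (φ j) • (w (φ j)).1.2) Filter.atTop
        (nhds (0 : Fin d → ℝ)) := by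
      rw [tendsto_zero_iff_norm_tendsto_zero]
      have : (fun j => ‖lam (φ j) • (w (φ j)).1.2‖) = fun j => (s (φ j))⁻¹ := by
        funext j; exact hA (φ j)
      rw [this]; exact hNsφ
    have hξlim : Filter.Tendsto (fun j => (lam (φ j))⁻¹ • (c (φ j) • (w (φ j)).2.2))
        Filter.atTop (nhds (0 : Fin d → ℝ)) := by
      rw [tendsto_zero_iff_norm_tendsto_zero]
      exact squeeze_zero (fun j => norm_nonneg _) (fun j => hB (φ j)) hNsφ
    -- the limit point
    have hvlim : Filter.Tendsto (fun j => v (φ j)) Filter.atTop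
        (nhds (((x₀, (0 : Fin d → ℝ)), (k₀, (0 : Fin d → ℝ))))) :=
      (hxlim.prodMk_nhds hhlim).prodMk_nhds (hklim.prodMk_nhds hξlim)
    have hpclos : ((x₀, (0 : Fin d → ℝ)), (k₀, (0 : Fin d → ℝ))) ∈
        closure (flowOrbitsSL n d W ε) :=
      mem_closure_of_tendsto hvlim (Filter.Eventually.of_forall fun j => hvmem (φ j))
    have hk₀ : k₀ ≠ 0 := by
      have := hx₀.2
      rw [mem_sphere_zero_iff_norm] at this
      intro h; rw [h] at this; simp at this
    have := hsub ⟨hpclos, rfl, by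
      simp only [ne_eq, Prod.mk_eq_zero, not_and]
      intro h; exact absurd h hk₀⟩
    exact hk₀ this.2.1
  · -- soft landing → closure condition
    rintro ⟨ε, hε, δ, hδ, hsl⟩
    refine ⟨ε, hε, ?_⟩
    set S : Set (Pt n d × Pt n d) := {v | ‖v.2.1‖ ≤ δ * ‖v.1.2‖ * ‖v.2.2‖} with hS_def
    have hSclosed : IsClosed S := by
      apply isClosed_le
      · exact (continuous_fst.comp continuous_snd).norm
      · exact ((continuous_const.mul
          (continuous_snd.comp continuous_fst).norm).mul
          (continuous_snd.comp continuous_snd).norm)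
    have horb : flowOrbitsSL n d W ε ⊆ S := by
      rintro v ⟨u, huW, huε, l, hl, rfl⟩
      have hb := hsl u huW huε
      simp only [hS_def, mem_setOf_eq, norm_smul, Real.norm_eq_abs,
        abs_of_pos hl, abs_of_pos (inv_pos.mpr hl)]
      calc ‖u.2.1‖ ≤ δ * ‖u.1.2‖ * ‖u.2.2‖ := hb
        _ = δ * (l * ‖u.1.2‖) * (l⁻¹ * ‖u.2.2‖) := by
            field_simp
    have hclos : closure (flowOrbitsSL n d W ε) ⊆ S :=
      closure_minimal horb hSclosed
    rintro p ⟨hpc, hp0, hpne⟩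
    have hpS := hclos hpc
    simp only [hS_def, mem_setOf_eq, hp0, norm_zero, mul_zero, zero_mul] at hpS
    have hk0 : p.2.1 = 0 := norm_le_zero_iff.mp hpS
    refine ⟨hp0, hk0, ?_⟩
    intro hξ0
    exact hpne (Prod.ext hk0 hξ0)
end
end

section
/- Stability of the soft landing condition under sums: let Γ₁, Γ₂ be closed conic subsets of T•ℝ^{n+d}∖0 each satisfying the soft landing condition (∃ε,δ > 0 with Γ_i ∩ {|h|≤ε} ⊂ {|k| ≤ δ|h||ξ|}), and such that Γ₁ ∩ (−Γ₂) = ∅ (uniformly: ∃δ′ > 0 with δ′(|η₁|+|η₂|) ≤ |η₁+η₂| over compacts). Then the fiberwise sum Γ₁ + Γ₂ = {(x,h; η₁+η₂) : (x,h;η_i) ∈ Γ_i} also satisfies the soft landing condition, and hence so does Γ₁ ∪ Γ₂ ∪ (Γ₁+Γ₂). -/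
open Set

noncomputable section

/-- Stability of the soft landing condition under fiberwise sums: if `Γ₁`, `Γ₂` satisfy the
soft landing condition and `Γ₁ ∩ (−Γ₂) = ∅` uniformly, then
`Γ₁ ∪ Γ₂ ∪ (Γ₁ + Γ₂)` satisfies the soft landing condition. -/
theorem stmt13 (n d : ℕ) (Γ₁ Γ₂ : Set (Pt n d × Pt n d))
    (hsl₁ : ∃ ε > (0:ℝ), ∃ δ > (0:ℝ), ∀ w ∈ Γ₁, ‖w.1.2‖ ≤ ε →
      ‖w.2.1‖ ≤ δ * ‖w.1.2‖ * ‖w.2.2‖)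
    (hsl₂ : ∃ ε > (0:ℝ), ∃ δ > (0:ℝ), ∀ w ∈ Γ₂, ‖w.1.2‖ ≤ ε →
      ‖w.2.1‖ ≤ δ * ‖w.1.2‖ * ‖w.2.2‖)
    (hdisj : ∃ δ' > (0:ℝ), ∀ p η₁ η₂ : Pt n d,
      (p, η₁) ∈ Γ₁ → (p, η₂) ∈ Γ₂ → δ' * (‖η₁‖ + ‖η₂‖) ≤ ‖η₁ + η₂‖) :
    ∃ ε > (0:ℝ), ∃ δ > (0:ℝ),
      ∀ w ∈ Γ₁ ∪ Γ₂ ∪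
          {v : Pt n d × Pt n d | ∃ η₁ η₂ : Pt n d,
            (v.1, η₁) ∈ Γ₁ ∧ (v.1, η₂) ∈ Γ₂ ∧ v.2 = η₁ + η₂},
        ‖w.1.2‖ ≤ ε → ‖w.2.1‖ ≤ δ * ‖w.1.2‖ * ‖w.2.2‖ := by
  obtain ⟨ε₁, hε₁, δ₁, hδ₁, h₁⟩ := hsl₁
  obtain ⟨ε₂, hε₂, δ₂, hδ₂, h₂⟩ := hsl₂
  obtain ⟨δ', hδ', hd⟩ := hdisj
  set δb : ℝ := δ₁ + δ₂ with hδb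
  clear_value δb
  have hδbpos : 0 < δb := by rw [hδb]; positivity
  refine ⟨min (min ε₁ ε₂) (δ' / (2 * δb)), by positivity, δb + δb / δ', by positivity, ?_⟩
  rintro w (hw | hw) hh
  · rcases hw with hw | hw
    · calc ‖w.2.1‖ ≤ δ₁ * ‖w.1.2‖ * ‖w.2.2‖ :=
            h₁ w hw (le_trans hh (le_trans (min_le_left _ _) (min_le_left _ _)))
        _ ≤ (δb + δb / δ') * ‖w.1.2‖ * ‖w.2.2‖ := by
            have : δ₁ ≤ δb + δb / δ' := by
              have : 0 ≤ δb / δ' := by positivity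
              nlinarith
            nlinarith [norm_nonneg w.1.2, norm_nonneg w.2.2, mul_nonneg (norm_nonneg w.1.2) (norm_nonneg w.2.2)]
    · calc ‖w.2.1‖ ≤ δ₂ * ‖w.1.2‖ * ‖w.2.2‖ :=
            h₂ w hw (le_trans hh (le_trans (min_le_left _ _) (min_le_right _ _)))
        _ ≤ (δb + δb / δ') * ‖w.1.2‖ * ‖w.2.2‖ := by
            have : δ₂ ≤ δb + δb / δ' := by
              have : 0 ≤ δb / δ' := by positivity
              nlinarith
            nlinarith [norm_nonneg w.1.2, norm_nonneg w.2.2, mul_nonneg (norm_nonneg w.1.2) (norm_nonneg w.2.2)]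
  · obtain ⟨η₁, η₂, hm₁, hm₂, hsum⟩ := hw
    have hh₁ : ‖w.1.2‖ ≤ ε₁ := le_trans hh (le_trans (min_le_left _ _) (min_le_left _ _))
    have hh₂ : ‖w.1.2‖ ≤ ε₂ := le_trans hh (le_trans (min_le_left _ _) (min_le_right _ _))
    have hhε : ‖w.1.2‖ ≤ δ' / (2 * δb) := le_trans hh (min_le_right _ _)
    have k₁ : ‖η₁.1‖ ≤ δ₁ * ‖w.1.2‖ * ‖η₁.2‖ := h₁ (w.1, η₁) hm₁ hh₁
    have k₂ : ‖η₂.1‖ ≤ δ₂ * ‖w.1.2‖ * ‖η₂.2‖ := h₂ (w.1, η₂) hm₂ hh₂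
    have hnn : (0:ℝ) ≤ ‖w.1.2‖ := norm_nonneg _
    set S : ℝ := ‖η₁.2‖ + ‖η₂.2‖ with hS
    clear_value S
    have hSnn : 0 ≤ S := by rw [hS]; positivity
    have hA : ‖η₁.1 + η₂.1‖ ≤ δb * ‖w.1.2‖ * S := by
      have ht := norm_add_le η₁.1 η₂.1
      rw [hS, hδb]
      nlinarith [mul_nonneg (mul_nonneg hδ₁.le hnn) (norm_nonneg η₂.2),
        mul_nonneg (mul_nonneg hδ₂.le hnn) (norm_nonneg η₁.2)]
    have hdlow : δ' * S ≤ max ‖η₁.1 + η₂.1‖ ‖η₁.2 + η₂.2‖ := by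
      have := hd w.1 η₁ η₂ hm₁ hm₂
      have hs1 : ‖η₁.2‖ ≤ ‖η₁‖ := norm_snd_le η₁
      have hs2 : ‖η₂.2‖ ≤ ‖η₂‖ := norm_snd_le η₂
      have hmax : ‖η₁ + η₂‖ = max ‖(η₁ + η₂).1‖ ‖(η₁ + η₂).2‖ := rfl
      simp only [Prod.fst_add, Prod.snd_add] at hmax
      rw [hmax] at this
      nlinarith
    rw [hsum]
    show ‖η₁.1 + η₂.1‖ ≤ (δb + δb / δ') * ‖w.1.2‖ * ‖(η₁ + η₂).2‖
    have hsnd : (η₁ + η₂).2 = η₁.2 + η₂.2 := rfl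
    rw [hsnd]
    rcases eq_or_lt_of_le hSnn with hS0 | hSpos
    · -- S = 0
      have hA0 : ‖η₁.1 + η₂.1‖ ≤ 0 := by
        have := hA; rw [← hS0] at this; linarith [this]
      have hR : 0 ≤ (δb + δb / δ') * ‖w.1.2‖ * ‖η₁.2 + η₂.2‖ := by positivity
      linarith
    · -- S > 0 : the max is the second component
      have hkey : δb * ‖w.1.2‖ ≤ δ' / 2 := by
        have := mul_le_mul_of_nonneg_left hhε (le_of_lt hδbpos)
        calc δb * ‖w.1.2‖ ≤ δb * (δ' / (2 * δb)) := this
          _ = δ' / 2 := by field_simp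
      have hAsmall : ‖η₁.1 + η₂.1‖ < δ' * S := by
        have h1 : δb * ‖w.1.2‖ * S ≤ (δ' / 2) * S :=
          mul_le_mul_of_nonneg_right hkey hSnn
        have h2 : (δ' / 2) * S < δ' * S :=
          mul_lt_mul_of_pos_right (by linarith) hSpos
        linarith
      have hB : δ' * S ≤ ‖η₁.2 + η₂.2‖ := by
        rcases max_cases ‖η₁.1 + η₂.1‖ ‖η₁.2 + η₂.2‖ with ⟨heq, _⟩ | ⟨heq, _⟩
        · rw [heq] at hdlow; linarith
        · rw [heq] at hdlow; exact hdlow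
      have hSle : S ≤ ‖η₁.2 + η₂.2‖ / δ' := by
        rw [le_div_iff₀ hδ']; nlinarith
      have hfin : δb / δ' ≤ δb + δb / δ' := by linarith
      calc ‖η₁.1 + η₂.1‖ ≤ δb * ‖w.1.2‖ * S := hA
        _ ≤ δb * ‖w.1.2‖ * (‖η₁.2 + η₂.2‖ / δ') :=
            mul_le_mul_of_nonneg_left hSle (mul_nonneg hδbpos.le hnn)
        _ = (δb / δ') * ‖w.1.2‖ * ‖η₁.2 + η₂.2‖ := by ring
        _ ≤ (δb + δb / δ') * ‖w.1.2‖ * ‖η₁.2 + η₂.2‖ :=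
            mul_le_mul_of_nonneg_right
              (mul_le_mul_of_nonneg_right hfin hnn) (norm_nonneg _)
end
end

section
/- Locality of poles of the meromorphic regularization: let t ∈ E_s(U∖I) and define for Re(μ) large the holomorphic family ⟨t^μ, ω⟩ = ∫₀¹ (dλ/λ) λ^μ ⟨t ψ_{λ^{-1}}, ω⟩ (with ψ = −ρχ supported in an annulus around I). If μ ↦ t^μ extends meromorphically to ℂ with values in 𝒟′(U), then all the Laurent coefficients of negative index at any pole μ₀ are distributions supported on U ∩ I. -/
open Set MeasureTheory Filter Topology Metric

noncomputable section

/-- Test functions on `U`. -/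
def IsTestOn (n d : ℕ) (U : Set (Pt n d)) (φ : Pt n d → ℝ) : Prop :=
  ContDiff ℝ (⊤ : ℕ∞) φ ∧ HasCompactSupport φ ∧ tsupport φ ⊆ U

/-- The pairing `⟨t_λ, φ⟩ = λ^{-d} ⟨t, φ(·, λ^{-1}·)⟩`. -/
def pairScaleD (n d : ℕ) (t : (Pt n d → ℝ) → ℝ) (l : ℝ) (φ : Pt n d → ℝ) : ℝ :=
  t (fun p => φ (p.1, l⁻¹ • p.2)) / l ^ d

/-- `t ∈ E_s(U)`: weak homogeneity of degree `s`. -/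
def WeaklyHomogOn (n d : ℕ) (U : Set (Pt n d)) (s : ℝ) (t : (Pt n d → ℝ) → ℝ) : Prop :=
  ∀ φ : Pt n d → ℝ, IsTestOn n d U φ →
    ∃ C : ℝ, ∀ l ∈ Set.Ioc (0:ℝ) 1, |l ^ (-s) * pairScaleD n d t l φ| ≤ C

section AuxLemmas
variable {E F : Type*} [NormedAddCommGroup E] [NormedSpace ℝ E]
  [NormedAddCommGroup F] [NormedSpace ℝ F]

lemma aux_param_iFD_contDiff {f : ℝ × E → F} (hf : ContDiff ℝ (⊤ : ℕ∞) f) (i : ℕ) :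
    ContDiff ℝ (⊤ : ℕ∞) (fun q : ℝ × E => iteratedFDeriv ℝ i (fun y => f (q.1, y)) q.2) := by
  induction i with
  | zero =>
      exact ((continuousMultilinearCurryFin0 ℝ E F).symm.contDiff).comp hf
  | succ i IH =>
      have hunc : ContDiff ℝ (⊤ : ℕ∞) (Function.uncurry fun (q : ℝ × E) (y : E) =>
          iteratedFDeriv ℝ i (fun y' => f (q.1, y')) y) :=
        IH.comp ((contDiff_fst.fst).prodMk contDiff_snd)
      have h1 : ContDiff ℝ (⊤ : ℕ∞) (fun q : ℝ × E =>
          fderiv ℝ (fun y => iteratedFDeriv ℝ i (fun y' => f (q.1, y')) y) q.2) :=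
        hunc.fderiv contDiff_snd (by exact_mod_cast le_top)
      have h2 := ((continuousMultilinearCurryLeftEquiv ℝ
          (fun _ : Fin (i + 1) => E) F).symm.contDiff).comp h1
      have heq : (fun q : ℝ × E => iteratedFDeriv ℝ (i + 1) (fun y => f (q.1, y)) q.2)
          = fun q : ℝ × E => (continuousMultilinearCurryLeftEquiv ℝ
              (fun _ : Fin (i + 1) => E) F).symm
              (fderiv ℝ (fun y => iteratedFDeriv ℝ i (fun y' => f (q.1, y')) y) q.2) := by
        funext q
        rw [iteratedFDeriv_succ_eq_comp_left]
        rfl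
      rw [heq]
      exact h2

lemma aux_iFD_sub {f g : E → F} {i : ℕ} (hf : ContDiff ℝ (⊤ : ℕ∞) f)
    (hg : ContDiff ℝ (⊤ : ℕ∞) g) (x : E) :
    iteratedFDeriv ℝ i (f - g) x = iteratedFDeriv ℝ i f x - iteratedFDeriv ℝ i g x := by
  have h1 : ContDiff ℝ (i : ℕ∞) f := hf.of_le (by exact_mod_cast le_top)
  have h2 : ContDiff ℝ (i : ℕ∞) (-g) := hg.neg.of_le (by exact_mod_cast le_top)
  rw [sub_eq_add_neg, iteratedFDeriv_add_apply h1.contDiffAt h2.contDiffAt,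
    iteratedFDeriv_neg_apply, sub_eq_add_neg]

lemma aux_iFD_congr {f g : E → F} {x : E} (h : f =ᶠ[nhds x] g) (i : ℕ) :
    iteratedFDeriv ℝ i f x = iteratedFDeriv ℝ i g x := by
  simp only [← iteratedFDerivWithin_univ]
  exact Filter.EventuallyEq.iteratedFDerivWithin_eq
    (by simpa [nhdsWithin_univ] using h) h.self_of_nhds i

end AuxLemmas

/-- Locality of the poles of the meromorphic regularization
`⟨t^μ, ω⟩ = ∫₀¹ (dλ/λ) λ^μ ⟨t ψ_{λ^{-1}}, ω⟩`: all negative-index Laurent coefficients of a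
meromorphic extension are supported on `U ∩ I`; i.e., paired against any test form
supported in `U ∖ I` they vanish. -/
theorem stmt18 (n d : ℕ) (s σ : ℝ) (U : Set (Pt n d)) (hU : IsOpen U)
    (t : (Pt n d → ℝ) →ₗ[ℝ] ℝ) (ht : IsLocDistrib n d (fun φ => t φ))
    (χ : Pt n d → ℝ) (hχsm : ContDiff ℝ (⊤ : ℕ∞) χ)
    (hχ : ∀ K : Set (Fin n → ℝ), IsCompact K → ∃ a b : ℝ, 0 < a ∧ a < b ∧
      (∀ p : Pt n d, p.1 ∈ K → ‖p.2‖ ≤ a → χ p = 1) ∧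
      (∀ p : Pt n d, p.1 ∈ K → b ≤ ‖p.2‖ → χ p = 0))
    (ψ : Pt n d → ℝ)
    (hψ : ∀ p : Pt n d, ψ p = -(∑ j, p.2 j * fderiv ℝ χ p ((0, Pi.single j 1) : Pt n d)))
    (hhom : WeaklyHomogOn n d (U \ {p : Pt n d | p.2 = 0}) s (fun φ => t φ))
    (S : ℂ → (Pt n d → ℝ) → ℂ)
    (hagree : ∀ ω, IsTestOn n d U ω → ∀ μ : ℂ, σ < μ.re →
      S μ ω = ∫ l in Set.Ioc (0:ℝ) 1,
        ((l : ℂ) ^ μ * ((t (fun p => ψ (p.1, l⁻¹ • p.2) * ω p) : ℝ) : ℂ)) / (l : ℂ))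
    (hmero : ∀ ω, IsTestOn n d U ω → ∀ μ₀ : ℂ, ∃ r > (0:ℝ), ∃ Np : ℕ,
      DifferentiableOn ℂ (fun μ => (μ - μ₀) ^ Np * S μ ω) (Metric.ball μ₀ r)) :
    ∀ ω, IsTestOn n d U ω → tsupport ω ⊆ U \ {p : Pt n d | p.2 = 0} →
      ∀ μ₀ : ℂ, ∃ r > (0:ℝ), ∀ k : ℤ, k < 0 →
        (∮ μ in C(μ₀, r), (μ - μ₀) ^ (-k - 1) * S μ ω) = 0 := by
  intro ω hω hsupp μ₀
  obtain ⟨g, hgdef⟩ : ∃ g : ℝ → ℝ,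
      g = fun l => t (fun p => ψ (p.1, l⁻¹ • p.2) * ω p) := ⟨_, rfl⟩
  obtain ⟨F, hFdef⟩ : ∃ F : ℂ → ℂ,
      F = fun μ => ∫ l in Set.Ioc (0:ℝ) 1, ((l : ℂ) ^ μ * ((g l : ℝ) : ℂ)) / (l : ℂ) := ⟨_, rfl⟩
  have hSF : ∀ μ : ℂ, σ < μ.re → S μ ω = F μ := by
    intro μ hμ
    rw [hagree ω hω μ hμ, hFdef, hgdef]
  -- smoothness of ψ
  have hψsm : ContDiff ℝ (⊤ : ℕ∞) ψ := by
    have hfd : ContDiff ℝ (⊤ : ℕ∞) (fun p : Pt n d => fderiv ℝ χ p) :=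
      hχsm.fderiv_right (by exact_mod_cast le_top)
    have hterm : ∀ j : Fin d, ContDiff ℝ (⊤ : ℕ∞)
        (fun p : Pt n d => p.2 j * fderiv ℝ χ p ((0, Pi.single j 1) : Pt n d)) := by
      intro j
      exact ((contDiff_pi.1 contDiff_snd) j).mul (hfd.clm_apply contDiff_const)
    have hsum : ContDiff ℝ (⊤ : ℕ∞) (fun p : Pt n d =>
        ∑ j : Fin d, p.2 j * fderiv ℝ χ p ((0, Pi.single j 1) : Pt n d)) :=
      ContDiff.sum fun j _ => hterm j
    have : ψ = fun p : Pt n d =>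
        -(∑ j : Fin d, p.2 j * fderiv ℝ χ p ((0, Pi.single j 1) : Pt n d)) := funext hψ
    rw [this]
    exact hsum.neg
  -- compact support data
  set K : Set (Pt n d) := tsupport ω with hKdef
  have hK : IsCompact K := hω.2.1
  set K₁ : Set (Fin n → ℝ) := Prod.fst '' K with hK₁def
  have hK₁ : IsCompact K₁ := hK.image continuous_fst
  obtain ⟨a, b, ha, hab, hχ1, hχ0⟩ := hχ K₁ hK₁
  have hb : 0 < b := ha.trans hab
  -- ψ vanishes far from I over K₁
  have hψ0 : ∀ p : Pt n d, p.1 ∈ K₁ → b < ‖p.2‖ → ψ p = 0 := by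
    intro p hp1 hpb
    have hz : ∀ j : Fin d, fderiv ℝ χ p ((0, Pi.single j 1) : Pt n d) = 0 := by
      intro j
      set v : Pt n d := ((0, Pi.single j 1) : Pt n d) with hvdef
      have hline : HasDerivAt (fun s : ℝ => p + s • v) v 0 := by
        simpa using ((hasDerivAt_id (0 : ℝ)).smul_const v).const_add p
      have hχd : HasFDerivAt χ (fderiv ℝ χ p) (p + (0 : ℝ) • v) := by
        have : p + (0 : ℝ) • v = p := by simp
        rw [this]
        exact (hχsm.differentiable (by simp) p).hasFDerivAt
      have hc : HasDerivAt (fun s : ℝ => χ (p + s • v)) (fderiv ℝ χ p v) 0 :=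
        hχd.comp_hasDerivAt 0 hline
      have hev : (fun s : ℝ => χ (p + s • v)) =ᶠ[nhds 0] fun _ => (0 : ℝ) := by
        have hcont : Continuous fun s : ℝ => ‖(p + s • v).2‖ := by
          apply continuous_norm.comp
          exact (continuous_snd.comp (continuous_const.add (continuous_id.smul continuous_const)))
        have h0 : b < ‖(p + (0 : ℝ) • v).2‖ := by simpa using hpb
        have hopen : IsOpen {s : ℝ | b < ‖(p + s • v).2‖} :=
          isOpen_lt continuous_const hcont
        filter_upwards [hopen.mem_nhds h0] with u hu
        apply hχ0
        · have : (p + u • v).1 = p.1 := by simp [hvdef]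
          rw [this]; exact hp1
        · exact le_of_lt hu
      have h0d : HasDerivAt (fun s : ℝ => χ (p + s • v)) 0 0 :=
        (hasDerivAt_const (0 : ℝ) (0 : ℝ)).congr_of_eventuallyEq hev
      have := hc.unique h0d
      rwa [hvdef] at this
    rw [hψ p]
    simp [hz]
  -- small scales kill the integrand
  obtain ⟨l₀, hl₀pos, hl₀le, hgvan⟩ : ∃ l₀ : ℝ, 0 < l₀ ∧ l₀ ≤ 1 ∧
      ∀ l : ℝ, 0 < l → l < l₀ → g l = 0 := by
    have hzero : ∀ l : ℝ, (∀ p : Pt n d, ψ (p.1, l⁻¹ • p.2) * ω p = 0) → g l = 0 := by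
      intro l hl
      rw [hgdef]
      simp only
      have : (fun p : Pt n d => ψ (p.1, l⁻¹ • p.2) * ω p) = 0 := funext hl
      rw [this]
      exact map_zero t
    rcases eq_empty_or_nonempty K with hKe | hKne
    · refine ⟨1, one_pos, le_rfl, fun l hl hl1 => hzero l fun p => ?_⟩
      have hωp : ω p = 0 := by
        apply image_eq_zero_of_notMem_tsupport
        rw [← hKdef, hKe]
        exact notMem_empty p
      rw [hωp, mul_zero]
    · obtain ⟨p₀, hp₀K, hp₀min⟩ := hK.exists_isMinOn hKne
        ((continuous_norm.comp continuous_snd).continuousOn :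
          ContinuousOn (fun p : Pt n d => ‖p.2‖) K)
      have hε : 0 < ‖p₀.2‖ := by
        have h2 : p₀.2 ≠ 0 := (hsupp hp₀K).2
        simpa [norm_pos_iff] using h2
      set ε : ℝ := ‖p₀.2‖
      refine ⟨min (ε / b) 1, lt_min (by positivity) one_pos, min_le_right _ _, ?_⟩
      intro l hl hll
      apply hzero
      intro p
      by_cases hωp : ω p = 0
      · rw [hωp, mul_zero]
      · have hpK : p ∈ K := subset_closure (Function.mem_support.2 hωp)
        have h1 : p.1 ∈ K₁ := ⟨p, hpK, rfl⟩
        have hεp : ε ≤ ‖p.2‖ := hp₀min hpK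
        have hlb : l < ε / b := lt_of_lt_of_le hll (min_le_left _ _)
        have h2 : b < ‖l⁻¹ • p.2‖ := by
          rw [norm_smul, Real.norm_eq_abs, abs_of_pos (inv_pos.2 hl), inv_mul_eq_div,
            lt_div_iff₀ hl]
          calc b * l < ε := by
                have := (lt_div_iff₀ hb).1 hlb
                linarith [this]
            _ ≤ ‖p.2‖ := hεp
        rw [hψ0 (p.1, l⁻¹ • p.2) h1 h2, zero_mul]
  -- continuity of g
  have hgcont : ∀ l : ℝ, 0 < l → ContinuousAt g l := by
    intro l hl
    -- a globally smooth function agreeing with the inverse on [l/2, ∞)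
    obtain ⟨iv, hivsm, hiv⟩ : ∃ iv : ℝ → ℝ, ContDiff ℝ (⊤ : ℕ∞) iv ∧
        ∀ u : ℝ, l / 2 ≤ u → iv u = u⁻¹ := by
      refine ⟨fun u => Real.smoothTransition ((u - l / 4) * (8 / l)) * u⁻¹, ?_, ?_⟩
      · rw [contDiff_iff_contDiffAt]
        intro u
        rcases lt_or_ge u (l / 4) with hu | hu
        · apply (contDiffAt_const (c := (0 : ℝ))).congr_of_eventuallyEq
          have hopen : IsOpen (Set.Iio (l / 4)) := isOpen_Iio
          filter_upwards [hopen.mem_nhds hu] with v hv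
          have : (v - l / 4) * (8 / l) ≤ 0 := by
            apply mul_nonpos_of_nonpos_of_nonneg
            · have : v < l / 4 := hv
              linarith
            · positivity
          rw [Real.smoothTransition.zero_of_nonpos this, zero_mul]
        · have hu0 : u ≠ 0 := by
            have : 0 < u := lt_of_lt_of_le (by positivity) hu
            exact this.ne'
          exact ((Real.smoothTransition.contDiff.comp
            (((contDiff_id.sub contDiff_const).mul contDiff_const))).contDiffAt).mul
            (contDiffAt_inv ℝ hu0)
      · intro u hu
        show Real.smoothTransition ((u - l / 4) * (8 / l)) * u⁻¹ = u⁻¹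
        have h1 : (1 : ℝ) ≤ (u - l / 4) * (8 / l) := by
          have h2 : l / 4 ≤ u - l / 4 := by linarith
          calc (1 : ℝ) ≤ (l / 4) * (8 / l) := by
                rw [div_mul_div_comm]
                rw [le_div_iff₀ (by positivity)]
                linarith
            _ ≤ (u - l / 4) * (8 / l) := by
                apply mul_le_mul_of_nonneg_right h2 (by positivity)
        rw [Real.smoothTransition.one_of_one_le h1, one_mul]
    set Φ : ℝ × Pt n d → ℝ := fun q => ψ (q.2.1, iv q.1 • q.2.2) * ω q.2 with hΦdef
    have hΦsm : ContDiff ℝ (⊤ : ℕ∞) Φ := by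
      apply ContDiff.mul
      · apply hψsm.comp
        apply ContDiff.prodMk
        · exact contDiff_fst.comp contDiff_snd
        · exact (hivsm.comp contDiff_fst).smul (contDiff_snd.comp contDiff_snd)
      · exact hω.1.comp contDiff_snd
    have hφeq : ∀ u : ℝ, l / 2 ≤ u →
        (fun p : Pt n d => ψ (p.1, u⁻¹ • p.2) * ω p) = fun p => Φ (u, p) := by
      intro u hu
      funext p
      rw [hΦdef]
      simp only [hiv u hu]
    have hgu : ∀ u : ℝ, l / 2 ≤ u → g u = t (fun p => Φ (u, p)) := by
      intro u hu
      rw [hgdef]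
      simp only
      rw [hφeq u hu]
    obtain ⟨C, k, hCk⟩ := ht K hK
    -- uniform smallness of derivatives of differences
    have hEV : ∀ i : ℕ, ∀ δ : ℝ, 0 < δ → ∀ᶠ u in nhds l, ∀ x : Pt n d,
        ‖iteratedFDeriv ℝ i ((fun p => Φ (u, p)) - fun p => Φ (l, p)) x‖ ≤ δ := by
      intro i δ hδ
      have hDc : Continuous (fun q : ℝ × Pt n d =>
          iteratedFDeriv ℝ i (fun y => Φ (q.1, y)) q.2) :=
        (aux_param_iFD_contDiff hΦsm i).continuous
      have hP : IsCompact ((Set.Icc (l / 2) (2 * l)) ×ˢ K) := isCompact_Icc.prod hK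
      have hUC := hP.uniformContinuousOn_of_continuous hDc.continuousOn
      rw [Metric.uniformContinuousOn_iff] at hUC
      obtain ⟨η, hη, hUC⟩ := hUC δ hδ
      have hball : ∀ᶠ u in nhds l, |u - l| < min η (l / 2) := by
        have hmem := Metric.ball_mem_nhds l (show (0:ℝ) < min η (l / 2) from lt_min hη (by positivity))
        filter_upwards [hmem] with u hu
        rw [Metric.mem_ball, Real.dist_eq] at hu
        exact hu
      filter_upwards [hball] with u hu x
      have huη : |u - l| < η := lt_of_lt_of_le hu (min_le_left _ _)
      have hul : |u - l| < l / 2 := lt_of_lt_of_le hu (min_le_right _ _)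
      have hu1 : u ∈ Set.Icc (l / 2) (2 * l) := by
        rcases abs_lt.1 hul with ⟨h1, h2⟩
        constructor <;> [linarith; linarith]
      have hl1 : l ∈ Set.Icc (l / 2) (2 * l) := by
        constructor <;> [linarith; linarith]
      have hΦu : ContDiff ℝ (⊤ : ℕ∞) (fun p : Pt n d => Φ (u, p)) :=
        hΦsm.comp (contDiff_const.prodMk contDiff_id)
      have hΦl : ContDiff ℝ (⊤ : ℕ∞) (fun p : Pt n d => Φ (l, p)) :=
        hΦsm.comp (contDiff_const.prodMk contDiff_id)
      by_cases hx : x ∈ K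
      · have heq : iteratedFDeriv ℝ i ((fun p => Φ (u, p)) - fun p => Φ (l, p)) x
            = iteratedFDeriv ℝ i (fun y => Φ (u, y)) x
              - iteratedFDeriv ℝ i (fun y => Φ (l, y)) x := aux_iFD_sub hΦu hΦl x
        rw [heq, ← dist_eq_norm]
        have hdist : dist ((u, x) : ℝ × Pt n d) ((l, x) : ℝ × Pt n d) < η := by
          rw [Prod.dist_eq, dist_self, Real.dist_eq, max_eq_left (abs_nonneg _)]
          exact huη
        exact (hUC (u, x) ⟨hu1, hx⟩ (l, x) ⟨hl1, hx⟩ hdist).le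
      · have hev : ((fun p => Φ (u, p)) - fun p => Φ (l, p)) =ᶠ[nhds x]
            (fun _ => (0 : ℝ)) := by
          have hopen : IsOpen Kᶜ := (isClosed_tsupport ω).isOpen_compl
          filter_upwards [hopen.mem_nhds hx] with y hy
          have hωy : ω y = 0 := image_eq_zero_of_notMem_tsupport hy
          simp [hΦdef, hωy]
        rw [aux_iFD_congr hev i]
        have : iteratedFDeriv ℝ i (fun _ : Pt n d => (0 : ℝ)) x = 0 := by
          rw [iteratedFDeriv_zero_fun]; rfl
        rw [this, norm_zero]
        exact hδ.le
    -- conclude continuity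
    rw [ContinuousAt, Metric.tendsto_nhds]
    intro ε hε
    set δ : ℝ := ε / (2 * (|C| + 1)) with hδdef
    have hδ : 0 < δ := by positivity
    have hall : ∀ᶠ u in nhds l, ∀ i ∈ Finset.range (k + 1), ∀ x : Pt n d,
        ‖iteratedFDeriv ℝ i ((fun p => Φ (u, p)) - fun p => Φ (l, p)) x‖ ≤ δ :=
      (Finset.range (k + 1)).eventually_all.2 fun i _ => hEV i δ hδ
    have hIoi : ∀ᶠ u in nhds l, l / 2 < u := by
      filter_upwards [Ioi_mem_nhds (show l / 2 < l by linarith)] with u hu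
      exact hu
    filter_upwards [hall, hIoi] with u hu1 hu2
    rw [Real.dist_eq]
    have hgueq := hgu u hu2.le
    have hgleq := hgu l (by linarith)
    have hφu : ContDiff ℝ (⊤ : ℕ∞) (fun p : Pt n d => Φ (u, p)) :=
      hΦsm.comp (contDiff_const.prodMk contDiff_id)
    have hφl : ContDiff ℝ (⊤ : ℕ∞) (fun p : Pt n d => Φ (l, p)) :=
      hΦsm.comp (contDiff_const.prodMk contDiff_id)
    set φd : Pt n d → ℝ := (fun p => Φ (u, p)) - fun p => Φ (l, p) with hφddef
    have hφdsm : ContDiff ℝ (⊤ : ℕ∞) φd := hφu.sub hφl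
    have hφdsupp : tsupport φd ⊆ K := by
      apply closure_minimal _ (isClosed_tsupport ω)
      intro p hp
      rw [Function.mem_support] at hp
      by_contra hpK
      apply hp
      have hωp : ω p = 0 := image_eq_zero_of_notMem_tsupport hpK
      rw [hφddef]
      simp [hΦdef, hωp]
    have hbound := hCk φd hφdsm hφdsupp δ (fun i hi x => hu1 i (Finset.mem_range_succ_iff.2 hi) x)
    have hsub : t φd = t (fun p => Φ (u, p)) - t (fun p => Φ (l, p)) := map_sub t _ _
    have hdiff : g u - g l = t φd := by rw [hgueq, hgleq, hsub]
    rw [hdiff]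
    calc |t φd| ≤ C * δ := hbound
      _ ≤ (|C| + 1) * δ := by
          apply mul_le_mul_of_nonneg_right _ hδ.le
          have := le_abs_self C
          linarith
      _ = ε / 2 := by
          rw [hδdef]
          field_simp
      _ < ε := by linarith
  -- bound for g on (0,1]
  obtain ⟨B, hB0, hB⟩ : ∃ B : ℝ, 0 ≤ B ∧ ∀ l ∈ Set.Ioc (0:ℝ) 1, |g l| ≤ B := by
    have hgco : ContinuousOn g (Set.Icc l₀ 1) := by
      intro x hx
      exact (hgcont x (lt_of_lt_of_le hl₀pos hx.1)).continuousWithinAt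
    obtain ⟨B₀, hB₀⟩ := isCompact_Icc.exists_bound_of_continuousOn hgco
    refine ⟨max B₀ 0, le_max_right _ _, ?_⟩
    intro l hl
    rcases lt_or_ge l l₀ with h | h
    · rw [hgvan l hl.1 h]
      simpa using le_max_right B₀ 0
    · have := hB₀ l ⟨h, hl.2⟩
      rw [Real.norm_eq_abs] at this
      exact this.trans (le_max_left _ _)
  -- F is entire
  have hFcontOn : ∀ μ : ℂ, ContinuousOn (fun l : ℝ => ((l : ℂ) ^ μ * ((g l : ℝ) : ℂ)) / (l : ℂ))
      (Set.Ioc (0:ℝ) 1) := by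
    intro μ l hl
    have hl0 : (0:ℝ) < l := hl.1
    have h1 : ContinuousAt (fun x : ℝ => (x : ℂ) ^ μ) l :=
      Complex.continuousAt_ofReal_cpow_const l μ (Or.inr hl0.ne')
    have h2 : ContinuousAt (fun x : ℝ => ((g x : ℝ) : ℂ)) l :=
      Complex.continuous_ofReal.continuousAt.comp (hgcont l hl0)
    have h3 : ContinuousAt (fun x : ℝ => (x : ℂ)) l := Complex.continuous_ofReal.continuousAt
    have hne : ((l : ℝ) : ℂ) ≠ 0 := by
      simp only [ne_eq, Complex.ofReal_eq_zero]
      exact hl0.ne'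
    exact (((h1.mul h2).div h3 hne)).continuousWithinAt
  have hcpow_bd : ∀ (ν : ℂ) (l : ℝ), 0 < l → l₀ ≤ l → l ≤ 1 →
      ‖(l : ℂ) ^ ν‖ ≤ Real.exp (|Real.log l₀| * (|ν.re| + 1)) := by
    intro ν l hl0 hll hl1
    rw [Complex.norm_cpow_eq_rpow_re_of_pos hl0,
      Real.rpow_def_of_pos hl0]
    apply Real.exp_le_exp.2
    have hlog : |Real.log l| ≤ |Real.log l₀| := by
      have h1 : Real.log l ≤ 0 := Real.log_nonpos hl0.le hl1
      have h2 : Real.log l₀ ≤ Real.log l := Real.log_le_log hl₀pos hll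
      rw [abs_of_nonpos h1, abs_of_nonpos (h2.trans h1)]
      linarith
    calc Real.log l * ν.re ≤ |Real.log l * ν.re| := le_abs_self _
      _ = |Real.log l| * |ν.re| := abs_mul _ _
      _ ≤ |Real.log l₀| * (|ν.re| + 1) := by
          apply mul_le_mul hlog (by linarith) (abs_nonneg _) (abs_nonneg _)
  have hFdiff : Differentiable ℂ F := by
    intro ν₀
    set E0 : ℝ := Real.exp (|Real.log l₀| * (|ν₀.re| + 1 + 1)) with hE0def
    have hE0 : 0 < E0 := Real.exp_pos _
    set L : ℝ := |Real.log l₀| with hLdef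
    have hL : 0 ≤ L := abs_nonneg _
    set Fi : ℂ → ℝ → ℂ := fun μ l => ((l : ℂ) ^ μ * ((g l : ℝ) : ℂ)) / (l : ℂ) with hFidef
    set Fi' : ℂ → ℝ → ℂ :=
      fun μ l => ((l : ℂ) ^ μ * Complex.log (l : ℂ) * ((g l : ℝ) : ℂ)) / (l : ℂ) with hFi'def
    have hmemae : ∀ᵐ l ∂(volume.restrict (Set.Ioc (0:ℝ) 1)), l ∈ Set.Ioc (0:ℝ) 1 :=
      ae_restrict_mem measurableSet_Ioc
    -- measurability
    have hmeas : ∀ μ : ℂ, AEStronglyMeasurable (Fi μ) (volume.restrict (Set.Ioc (0:ℝ) 1)) :=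
      fun μ => (hFcontOn μ).aestronglyMeasurable measurableSet_Ioc
    have hmeas' : AEStronglyMeasurable (Fi' ν₀) (volume.restrict (Set.Ioc (0:ℝ) 1)) := by
      apply ContinuousOn.aestronglyMeasurable _ measurableSet_Ioc
      intro l hl
      have hl0 : (0:ℝ) < l := hl.1
      have h1 : ContinuousAt (fun x : ℝ => (x : ℂ) ^ ν₀) l :=
        Complex.continuousAt_ofReal_cpow_const l ν₀ (Or.inr hl0.ne')
      have h2 : ContinuousAt (fun x : ℝ => ((g x : ℝ) : ℂ)) l :=
        Complex.continuous_ofReal.continuousAt.comp (hgcont l hl0)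
      have h3 : ContinuousAt (fun x : ℝ => (x : ℂ)) l := Complex.continuous_ofReal.continuousAt
      have hlog : ContinuousAt (fun x : ℝ => Complex.log (x : ℂ)) l := by
        apply (continuousAt_clog ?_).comp h3
        rw [Complex.mem_slitPlane_iff]
        left
        simpa using hl0
      have hne : ((l : ℝ) : ℂ) ≠ 0 := by
        simp only [ne_eq, Complex.ofReal_eq_zero]
        exact hl0.ne'
      exact ((((h1.mul hlog).mul h2).div h3 hne)).continuousWithinAt
    -- integrability of Fi ν₀
    have hIoc_fin : volume (Set.Ioc (0:ℝ) 1) < ⊤ := by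
      rw [Real.volume_Ioc]
      exact ENNReal.ofReal_lt_top
    have hint : Integrable (Fi ν₀) (volume.restrict (Set.Ioc (0:ℝ) 1)) := by
      apply Integrable.mono' (g := fun _ : ℝ => E0 * B / l₀)
        (integrable_const _) (hmeas ν₀)
      filter_upwards [hmemae] with l hl
      rcases lt_or_ge l l₀ with hsmall | hbig
      · have : g l = 0 := hgvan l hl.1 hsmall
        rw [hFidef]
        simp only [this]
        simp only [Complex.ofReal_zero, mul_zero, zero_div, norm_zero]
        positivity
      · rw [hFidef]
        simp only
        rw [norm_div, norm_mul]
        have h1 : ‖(l : ℂ) ^ ν₀‖ ≤ E0 := by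
          refine (hcpow_bd ν₀ l hl.1 hbig hl.2).trans ?_
          apply Real.exp_le_exp.2
          apply mul_le_mul_of_nonneg_left _ hL
          linarith
        have h2 : ‖((g l : ℝ) : ℂ)‖ ≤ B := by
          rw [Complex.norm_real, Real.norm_eq_abs]
          exact hB l hl
        have h3 : ‖((l : ℝ) : ℂ)‖ = l := by
          rw [Complex.norm_real, Real.norm_eq_abs, abs_of_pos hl.1]
        rw [h3]
        apply div_le_div₀ (by positivity) (mul_le_mul h1 h2 (norm_nonneg _) hE0.le) hl₀pos hbig
    -- derivative bound
    have hbd : ∀ᵐ l ∂(volume.restrict (Set.Ioc (0:ℝ) 1)), ∀ μ ∈ Metric.ball ν₀ 1,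
        ‖Fi' μ l‖ ≤ E0 * L * B / l₀ := by
      filter_upwards [hmemae] with l hl μ hμ
      rcases lt_or_ge l l₀ with hsmall | hbig
      · have : g l = 0 := hgvan l hl.1 hsmall
        rw [hFi'def]
        simp only [this]
        simp only [Complex.ofReal_zero, mul_zero, zero_div, norm_zero]
        positivity
      · rw [hFi'def]
        simp only
        rw [norm_div, norm_mul, norm_mul]
        have hre : |μ.re| ≤ |ν₀.re| + 1 := by
          have h1 : |(μ - ν₀).re| ≤ ‖μ - ν₀‖ := Complex.abs_re_le_norm _
          have h2 : ‖μ - ν₀‖ < 1 := by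
            rw [← Complex.dist_eq]
            exact hμ
          have h3 : |μ.re| ≤ |(μ - ν₀).re| + |ν₀.re| := by
            have : μ.re = (μ - ν₀).re + ν₀.re := by simp [Complex.sub_re]
            rw [this]
            exact abs_add_le _ _
          linarith
        have h1 : ‖(l : ℂ) ^ μ‖ ≤ E0 := by
          refine (hcpow_bd μ l hl.1 hbig hl.2).trans ?_
          apply Real.exp_le_exp.2
          apply mul_le_mul_of_nonneg_left _ hL
          linarith
        have hlogeq : Complex.log ((l : ℝ) : ℂ) = ((Real.log l : ℝ) : ℂ) :=
          (Complex.ofReal_log hl.1.le).symm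
        have h2 : ‖Complex.log ((l : ℝ) : ℂ)‖ ≤ L := by
          rw [hlogeq, Complex.norm_real, Real.norm_eq_abs]
          have ha : Real.log l ≤ 0 := Real.log_nonpos hl.1.le hl.2
          have hb' : Real.log l₀ ≤ Real.log l := Real.log_le_log hl₀pos hbig
          rw [hLdef, abs_of_nonpos ha, abs_of_nonpos (hb'.trans ha)]
          linarith
        have h3 : ‖((g l : ℝ) : ℂ)‖ ≤ B := by
          rw [Complex.norm_real, Real.norm_eq_abs]
          exact hB l hl
        have h4 : ‖((l : ℝ) : ℂ)‖ = l := by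
          rw [Complex.norm_real, Real.norm_eq_abs, abs_of_pos hl.1]
        rw [h4]
        apply div_le_div₀ (by positivity) _ hl₀pos hbig
        apply mul_le_mul _ h3 (norm_nonneg _) (by positivity)
        exact mul_le_mul h1 h2 (norm_nonneg _) hE0.le
    -- differentiability of the integrand
    have hdrv : ∀ᵐ l ∂(volume.restrict (Set.Ioc (0:ℝ) 1)), ∀ μ ∈ Metric.ball ν₀ 1,
        HasDerivAt (fun μ' => Fi μ' l) (Fi' μ l) μ := by
      filter_upwards [hmemae] with l hl μ _
      have hne : ((l : ℝ) : ℂ) ≠ 0 := by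
        simp only [ne_eq, Complex.ofReal_eq_zero]
        exact hl.1.ne'
      have hcp : HasDerivAt (fun μ' : ℂ => ((l : ℝ) : ℂ) ^ μ')
          (((l : ℝ) : ℂ) ^ μ * Complex.log ((l : ℝ) : ℂ)) μ := by
        simpa using (hasDerivAt_id μ).const_cpow (c := ((l : ℝ) : ℂ)) (Or.inl hne)
      exact (hcp.mul_const (((g l : ℝ) : ℂ))).div_const ((l : ℝ) : ℂ)
    have hres := hasDerivAt_integral_of_dominated_loc_of_deriv_le (Metric.ball_mem_nhds ν₀ one_pos)
      (Filter.Eventually.of_forall hmeas) hint hmeas' hbd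
      ((integrable_const _ : Integrable (fun _ : ℝ => E0 * L * B / l₀)
        (volume.restrict (Set.Ioc (0:ℝ) 1)))) hdrv
    have : HasDerivAt F (∫ l in Set.Ioc (0:ℝ) 1, Fi' ν₀ l) ν₀ := by
      rw [hFdef]
      exact hres.2
    exact this.differentiableAt
  -- propagation: S agrees with F near every point, off the point
  have hprop : ∀ μc : ℂ, ∃ r > (0:ℝ),
      EqOn (fun ν' => S ν' ω) F (Metric.ball μc r \ {μc}) := by
    set Z : Set ℂ := {μc | ∃ r > (0:ℝ),
      EqOn (fun ν' => S ν' ω) F (Metric.ball μc r \ {μc})} with hZdef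
    suffices hZuniv : Z = Set.univ by
      intro μc
      have : μc ∈ Z := by rw [hZuniv]; trivial
      exact this
    apply IsClopen.eq_univ
    swap
    · -- nonempty
      refine ⟨((σ + 1 : ℝ) : ℂ), 1/2, by norm_num, ?_⟩
      intro ν' hν'
      have hd : dist ν' ((σ + 1 : ℝ) : ℂ) < 1/2 := hν'.1
      have hre : σ < ν'.re := by
        have h1 : |(ν' - ((σ + 1 : ℝ) : ℂ)).re| ≤ ‖ν' - ((σ + 1 : ℝ) : ℂ)‖ :=
          Complex.abs_re_le_norm _
        have h2 : ‖ν' - ((σ + 1 : ℝ) : ℂ)‖ < 1/2 := by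
          rw [← Complex.dist_eq]; exact hd
        have h3 : (ν' - ((σ + 1 : ℝ) : ℂ)).re = ν'.re - (σ + 1) := by
          simp [Complex.sub_re]
        rw [h3] at h1
        have := abs_lt.1 (lt_of_le_of_lt h1 h2)
        linarith [this.1]
      exact hSF ν' hre
    constructor
    · -- closed
      apply isClosed_of_closure_subset
      intro μc hμc
      obtain ⟨r₀, hr₀, Np, hH⟩ := hmero ω hω μc
      rw [Metric.mem_closure_iff] at hμc
      obtain ⟨μ₁, hμ₁Z, hμ₁d⟩ := hμc r₀ hr₀
      obtain ⟨r₁, hr₁, hEq₁⟩ := hμ₁Z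
      have hμ₁ball : μ₁ ∈ Metric.ball μc r₀ := by
        rw [Metric.mem_ball, dist_comm]
        exact hμ₁d
      have hHa : AnalyticOnNhd ℂ (fun μ => (μ - μc) ^ Np * S μ ω) (Metric.ball μc r₀) :=
        hH.analyticOnNhd isOpen_ball
      have hKa : AnalyticOnNhd ℂ (fun μ => (μ - μc) ^ Np * F μ) (Metric.ball μc r₀) :=
        (((differentiable_id.sub_const μc).pow Np).mul
          hFdiff).differentiableOn.analyticOnNhd isOpen_ball
      set r₂ : ℝ := min r₁ (r₀ - dist μ₁ μc) with hr₂def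
      have hr₂ : 0 < r₂ := by
        apply lt_min hr₁
        rw [Metric.mem_ball] at hμ₁ball
        linarith
      have hfreq : ∃ᶠ z in nhdsWithin μ₁ {μ₁}ᶜ,
          (z - μc) ^ Np * S z ω = (z - μc) ^ Np * F z := by
        apply Filter.Eventually.frequently
        have hmem : Metric.ball μ₁ r₂ ∈ nhdsWithin μ₁ {μ₁}ᶜ :=
          mem_nhdsWithin_of_mem_nhds (Metric.ball_mem_nhds _ hr₂)
        filter_upwards [hmem, self_mem_nhdsWithin] with z hz1 hz2
        have hz3 : z ∈ Metric.ball μ₁ r₁ \ {μ₁} := by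
          constructor
          · exact Metric.ball_subset_ball (min_le_left _ _) hz1
          · exact hz2
        have : S z ω = F z := hEq₁ hz3
        rw [this]
      have heq := hHa.eqOn_of_preconnected_of_frequently_eq hKa
        (convex_ball μc r₀).isPreconnected hμ₁ball hfreq
      show ∃ r > (0:ℝ), EqOn (fun ν' => S ν' ω) F (Metric.ball μc r \ {μc})
      refine ⟨r₀, hr₀, ?_⟩
      intro ν' hν'
      have h1 := heq hν'.1
      simp only at h1
      have h2 : (ν' - μc) ^ Np ≠ 0 := by
        apply pow_ne_zero
        rw [sub_ne_zero]
        intro hcon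
        exact hν'.2 (by simp [hcon])
      exact mul_left_cancel₀ h2 h1
    · -- open
      rw [Metric.isOpen_iff]
      intro μc hμc
      obtain ⟨r, hr, hEq⟩ := hμc
      refine ⟨r, hr, ?_⟩
      intro μ₁ hμ₁
      by_cases hμe : μ₁ = μc
      · rw [hμe]; exact ⟨r, hr, hEq⟩
      · have hd : 0 < dist μ₁ μc := dist_pos.2 hμe
        refine ⟨min (r - dist μ₁ μc) (dist μ₁ μc), by
          apply lt_min _ hd
          rw [Metric.mem_ball] at hμ₁
          linarith, ?_⟩
        intro ν' hν'
        apply hEq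
        constructor
        · rw [Metric.mem_ball]
          calc dist ν' μc ≤ dist ν' μ₁ + dist μ₁ μc := dist_triangle _ _ _
            _ < min (r - dist μ₁ μc) (dist μ₁ μc) + dist μ₁ μc :=
                add_lt_add_of_lt_of_le hν'.1 le_rfl
            _ ≤ (r - dist μ₁ μc) + dist μ₁ μc := by
                exact add_le_add (min_le_left _ _) le_rfl
            _ = r := by ring
        · simp only [mem_singleton_iff]
          intro hcon
          rw [hcon] at hν'
          have h1 : dist μc μ₁ < dist μ₁ μc :=
            lt_of_lt_of_le hν'.1 (min_le_right _ _)
          rw [dist_comm] at h1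
          exact lt_irrefl _ h1
  -- conclusion
  obtain ⟨r, hr, hEq⟩ := hprop μ₀
  refine ⟨r / 2, by positivity, ?_⟩
  intro k hk
  have hcongr : (∮ μ in C(μ₀, r / 2), (μ - μ₀) ^ (-k - 1) * S μ ω)
      = ∮ μ in C(μ₀, r / 2), (μ - μ₀) ^ (-k - 1) * F μ := by
    apply circleIntegral.integral_congr (by positivity)
    intro μ hμ
    have hμd : dist μ μ₀ = r / 2 := mem_sphere.1 hμ
    have h1 : μ ∈ Metric.ball μ₀ r \ {μ₀} := by
      constructor
      · rw [Metric.mem_ball, hμd]; linarith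
      · simp only [mem_singleton_iff]
        intro h
        rw [h, dist_self] at hμd
        linarith
    have hSμ : S μ ω = F μ := hEq h1
    simp only [hSμ]
  rw [hcongr]
  set m : ℕ := (-k - 1).toNat with hmdef
  have hm : ((m : ℤ)) = -k - 1 := Int.toNat_of_nonneg (by omega)
  have hzpow : ∀ μ : ℂ, (μ - μ₀) ^ (-k - 1) = (μ - μ₀) ^ m := by
    intro μ; rw [← hm, zpow_natCast]
  have hfd : Differentiable ℂ (fun μ : ℂ => (μ - μ₀) ^ m * F μ) :=
    ((differentiable_id.sub_const μ₀).pow m).mul hFdiff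
  calc (∮ μ in C(μ₀, r / 2), (μ - μ₀) ^ (-k - 1) * F μ)
      = ∮ μ in C(μ₀, r / 2), (μ - μ₀) ^ m * F μ := by
        apply circleIntegral.integral_congr (by positivity)
        intro μ _
        simp only [hzpow]
    _ = 0 := by
        apply Complex.circleIntegral_eq_zero_of_differentiable_on_off_countable
          (by positivity) Set.countable_empty hfd.continuous.continuousOn
        intro z _
        exact hfd z
end
end

section
/- Gronwall bound for the conjugating flow between Euler vector fields: let Φ(λ) solve the non-autonomous ODE dΦ/dλ = X(λ, Φ(λ)) with Φ(1) = Id, where X(λ,x,h) = −(h^i A_i^j(x,λh) ∂_{x^j} + h^i h^j B_{ij}^k(x,λh) ∂_{h^k}) with A,B smooth. Then on a sufficiently small neighborhood {|h| ≤ ε₂} of a point of I, the h-component of the flow satisfies |h(λ)| ≤ e^{(1−λ)ε₁ b}|h(1)| for all λ ∈ [0,1] (with b a bound on |B| over the region), so the flow Φ(λ) exists on the whole closed interval [0,1] including λ = 0, with no blow-up. -/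
set_option maxHeartbeats 1000000


open Set

noncomputable section

/-- The nonautonomous vector field
`X(λ,x,h) = −(h^i A_i^j(x,λh) ∂_{x^j} + h^i h^j B_{ij}^k(x,λh) ∂_{h^k})`. -/
def XfieldAB (n d : ℕ) (A : Fin d → Fin n → Pt n d → ℝ)
    (B : Fin d → Fin d → Fin d → Pt n d → ℝ) (l : ℝ) (p : Pt n d) : Pt n d :=
  ((fun j' => -(∑ i, p.2 i * A i j' (p.1, l • p.2))),
   (fun k => -(∑ i, ∑ j, p.2 i * p.2 j * B i j k (p.1, l • p.2))))

namespace Stmt19Aux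

/-- clamp to `[-1,1]` -/
def cl (t : ℝ) : ℝ := max (-1) (min 1 t)

lemma cl_abs_le_one (t : ℝ) : |cl t| ≤ 1 := by
  rw [abs_le]
  exact ⟨le_max_left _ _, max_le (by norm_num) (min_le_left _ _)⟩

lemma cl_abs_le (t : ℝ) : |cl t| ≤ |t| := by
  rw [abs_le]
  constructor
  · rcases le_or_gt 1 |t| with h | h
    · exact le_trans (by linarith) (le_max_left _ _)
    · exact le_trans (le_min (by linarith [abs_nonneg t]) (neg_abs_le t)) (le_max_right _ _)
  · exact max_le (by linarith [abs_nonneg t]) ((min_le_right _ _).trans (le_abs_self t))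

lemma cl_eq {t : ℝ} (h : |t| ≤ 1) : cl t = t := by
  rw [abs_le] at h
  rw [cl, min_eq_right h.2, max_eq_right h.1]

lemma cl_lip (s t : ℝ) : |cl s - cl t| ≤ |s - t| := by
  have h1 : |min 1 s - min 1 t| ≤ |s - t| := by
    simpa using abs_min_sub_min_le_max 1 s 1 t
  have h2 := abs_max_sub_max_le_max (-1) (min 1 s) (-1) (min 1 t)
  simp only [sub_self, abs_zero] at h2
  exact h2.trans (max_le (abs_nonneg _) h1)

/-- clamp to `[-1,2]` -/
def clI (t : ℝ) : ℝ := max (-1) (min 2 t)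

lemma clI_mem (t : ℝ) : clI t ∈ Icc (-1:ℝ) 2 :=
  ⟨le_max_left _ _, max_le (by norm_num) (min_le_left _ _)⟩

lemma clI_eq {t : ℝ} (h : t ∈ Icc (-1:ℝ) 2) : clI t = t := by
  rw [clI, min_eq_right h.2, max_eq_right h.1]

lemma clI_cont : Continuous clI :=
  continuous_const.max (continuous_const.min continuous_id)

end Stmt19Aux

open Stmt19Aux

namespace Stmt19Aux

lemma abs_sum_le {m : ℕ} (g : Fin m → ℝ) (c : ℝ) (hg : ∀ i, |g i| ≤ c) :
    |∑ i, g i| ≤ (m:ℝ) * c := by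
  calc |∑ i, g i| ≤ ∑ i, |g i| := Finset.abs_sum_le_sum_abs _ _
    _ ≤ ∑ _i : Fin m, c := Finset.sum_le_sum fun i _ => hg i
    _ = (m:ℝ) * c := by
        simp [Finset.sum_const, Finset.card_univ, nsmul_eq_mul]

lemma Xfield_fst_bound (n d : ℕ) (A : Fin d → Fin n → Pt n d → ℝ)
    (B : Fin d → Fin d → Fin d → Pt n d → ℝ) (l : ℝ) (q : Pt n d) (M u : ℝ)
    (hM : 0 ≤ M) (hu : 0 ≤ u)
    (hA' : ∀ i j, |A i j (q.1, l • q.2)| ≤ M)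
    (hu' : ∀ i, |q.2 i| ≤ u) :
    ‖(XfieldAB n d A B l q).1‖ ≤ (d:ℝ) * (u * M) := by
  apply (pi_norm_le_iff_of_nonneg (by positivity)).2
  intro j
  show ‖-(∑ i, q.2 i * A i j (q.1, l • q.2))‖ ≤ _
  rw [Real.norm_eq_abs, abs_neg]
  refine abs_sum_le _ _ fun i => ?_
  rw [abs_mul]
  exact mul_le_mul (hu' i) (hA' i j) (abs_nonneg _) hu

lemma Xfield_snd_bound (n d : ℕ) (A : Fin d → Fin n → Pt n d → ℝ)
    (B : Fin d → Fin d → Fin d → Pt n d → ℝ) (l : ℝ) (q : Pt n d) (M u v : ℝ)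
    (hM : 0 ≤ M) (hu : 0 ≤ u) (hv : 0 ≤ v)
    (hB' : ∀ i j k, |B i j k (q.1, l • q.2)| ≤ M)
    (hu' : ∀ i, |q.2 i| ≤ u) (hv' : ∀ j, |q.2 j| ≤ v) :
    ‖(XfieldAB n d A B l q).2‖ ≤ (d:ℝ) * ((d:ℝ) * (u * v * M)) := by
  apply (pi_norm_le_iff_of_nonneg (by positivity)).2
  intro k
  show ‖-(∑ i, ∑ j, q.2 i * q.2 j * B i j k (q.1, l • q.2))‖ ≤ _
  rw [Real.norm_eq_abs, abs_neg]
  refine abs_sum_le _ _ fun i => ?_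
  refine abs_sum_le _ _ fun j => ?_
  rw [abs_mul, abs_mul]
  exact mul_le_mul (mul_le_mul (hu' i) (hv' j) (abs_nonneg _) hu) (hB' i j k)
    (abs_nonneg _) (by positivity)

end Stmt19Aux

/-- Gronwall bound for the conjugating flow between Euler vector fields: near any point of
`I`, the solution of `dΦ/dλ = X(λ, Φ(λ))`, `Φ(1) = Id`, exists on all of `[0,1]` with the
`h`-component bounded by `e^{(1−λ)ε₁ b}|h(1)|`. -/
theorem stmt19 (n d : ℕ) (A : Fin d → Fin n → Pt n d → ℝ)
    (B : Fin d → Fin d → Fin d → Pt n d → ℝ)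
    (hA : ∀ i j, ContDiff ℝ (⊤ : ℕ∞) (A i j))
    (hB : ∀ i j k, ContDiff ℝ (⊤ : ℕ∞) (B i j k))
    (x₀ : Fin n → ℝ) :
    ∃ ε₁ > (0:ℝ), ∃ ε₂ > (0:ℝ), ∃ b : ℝ, 0 ≤ b ∧ ε₂ ≤ ε₁ ∧
      (∀ l ∈ Set.Icc (0:ℝ) 1, ∀ p : Pt n d, ‖p.1 - x₀‖ ≤ 1 → ‖p.2‖ ≤ ε₁ →
        ‖(XfieldAB n d A B l p).2‖ ≤ b * ‖p.2‖ ^ 2) ∧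
      ∀ p : Pt n d, ‖p.1 - x₀‖ ≤ ε₂ → ‖p.2‖ ≤ ε₂ →
        ∃ γ : ℝ → Pt n d, γ 1 = p ∧
          (∀ l ∈ Set.Icc (0:ℝ) 1, HasDerivAt γ (XfieldAB n d A B l (γ l)) l) ∧
          ∀ l ∈ Set.Icc (0:ℝ) 1, ‖(γ l).2‖ ≤ Real.exp ((1 - l) * ε₁ * b) * ‖p.2‖ := by
  classical
  -- the compact region on which we bound `A` and `B`
  set K : Set (Pt n d) := Metric.closedBall x₀ 1 ×ˢ Metric.closedBall 0 2 with hKdef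
  have hKcomp : IsCompact K :=
    (isCompact_closedBall _ _).prod (isCompact_closedBall _ _)
  -- a uniform bound `M` for all the `A i j` and `B i j k` on `K`
  obtain ⟨M, hM0, hMA, hMB⟩ :
      ∃ M : ℝ, 0 ≤ M ∧ (∀ i j, ∀ y ∈ K, |A i j y| ≤ M) ∧
        (∀ i j k, ∀ y ∈ K, |B i j k y| ≤ M) := by
    set F : Pt n d → ℝ := fun y =>
      (∑ i, ∑ j, |A i j y|) + ∑ i, ∑ j, ∑ k, |B i j k y| with hF
    have hFcont : ContinuousOn F K := by
      apply ContinuousOn.add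
      · exact (continuous_finset_sum _ fun i _ => continuous_finset_sum _ fun j _ =>
          (hA i j).continuous.abs).continuousOn
      · exact (continuous_finset_sum _ fun i _ => continuous_finset_sum _ fun j _ =>
          continuous_finset_sum _ fun k _ => (hB i j k).continuous.abs).continuousOn
    obtain ⟨C₀, hC₀⟩ := hKcomp.exists_bound_of_continuousOn hFcont
    have hterm : ∀ y ∈ K, (∀ i j, |A i j y| ≤ F y) ∧ ∀ i j k, |B i j k y| ≤ F y := by
      intro y _
      constructor
      · intro i j
        have h1 : |A i j y| ≤ ∑ i', ∑ j', |A i' j' y| := by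
          calc |A i j y| ≤ ∑ j', |A i j' y| :=
                Finset.single_le_sum (f := fun j' => |A i j' y|)
                  (fun _ _ => abs_nonneg _) (Finset.mem_univ j)
            _ ≤ ∑ i', ∑ j', |A i' j' y| :=
                Finset.single_le_sum (f := fun i' => ∑ j', |A i' j' y|)
                  (fun _ _ => Finset.sum_nonneg fun _ _ => abs_nonneg _) (Finset.mem_univ i)
        have h2 : (0:ℝ) ≤ ∑ i', ∑ j', ∑ k', |B i' j' k' y| :=
          Finset.sum_nonneg fun _ _ => Finset.sum_nonneg fun _ _ =>
            Finset.sum_nonneg fun _ _ => abs_nonneg _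
        simp only [hF]; linarith
      · intro i j k
        have h1 : |B i j k y| ≤ ∑ i', ∑ j', ∑ k', |B i' j' k' y| := by
          calc |B i j k y| ≤ ∑ k', |B i j k' y| :=
                Finset.single_le_sum (f := fun k' => |B i j k' y|)
                  (fun _ _ => abs_nonneg _) (Finset.mem_univ k)
            _ ≤ ∑ j', ∑ k', |B i j' k' y| :=
                Finset.single_le_sum (f := fun j' => ∑ k', |B i j' k' y|)
                  (fun _ _ => Finset.sum_nonneg fun _ _ => abs_nonneg _) (Finset.mem_univ j)
            _ ≤ ∑ i', ∑ j', ∑ k', |B i' j' k' y| :=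
                Finset.single_le_sum (f := fun i' => ∑ j', ∑ k', |B i' j' k' y|)
                  (fun _ _ => Finset.sum_nonneg fun _ _ => Finset.sum_nonneg fun _ _ =>
                    abs_nonneg _) (Finset.mem_univ i)
        have h2 : (0:ℝ) ≤ ∑ i', ∑ j', |A i' j' y| :=
          Finset.sum_nonneg fun _ _ => Finset.sum_nonneg fun _ _ => abs_nonneg _
        simp only [hF]; linarith
    refine ⟨max C₀ 0, le_max_right _ _, ?_, ?_⟩
    · intro i j y hy
      have hFy : F y ≤ C₀ := (le_abs_self (F y)).trans (Real.norm_eq_abs (F y) ▸ hC₀ y hy)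
      exact ((hterm y hy).1 i j).trans (hFy.trans (le_max_left _ _))
    · intro i j k y hy
      have hFy : F y ≤ C₀ := (le_abs_self (F y)).trans (Real.norm_eq_abs (F y) ▸ hC₀ y hy)
      exact ((hterm y hy).2 i j k).trans (hFy.trans (le_max_left _ _))
  set b : ℝ := (d:ℝ) * ((d:ℝ) * M) with hbdef
  have hb0 : 0 ≤ b := by positivity
  set E : ℝ := Real.exp (2 * b) with hEdef
  have hE0 : 0 < E := Real.exp_pos _
  have hE1 : 1 ≤ E := Real.one_le_exp (by positivity)
  set D : ℝ := (d:ℝ) * M with hDdef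
  have hD0 : 0 ≤ D := by positivity
  set ε₂ : ℝ := (2 * (1 + 2 * D))⁻¹ * E⁻¹ with hε₂def
  have hε₂0 : 0 < ε₂ := by positivity
  have hEε : E * ε₂ = (2 * (1 + 2 * D))⁻¹ := by
    rw [hε₂def]; field_simp
  have hEεhalf : E * ε₂ ≤ 1/2 := by
    rw [hEε]
    have h12 : (2:ℝ) ≤ 2 * (1 + 2 * D) := by nlinarith
    calc (2 * (1 + 2 * D))⁻¹ ≤ 2⁻¹ := by
          apply inv_anti₀ (by norm_num) h12
      _ = 1/2 := by norm_num
  have hε₂E : ε₂ ≤ E * ε₂ := by nlinarith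
  refine ⟨1, one_pos, ε₂, hε₂0, b, hb0, by linarith, ?_, ?_⟩
  · -- the quadratic estimate for the h-component of the field
    intro l hl p hp1 hp2
    have hmem : ((p.1, l • p.2) : Pt n d) ∈ K := by
      rw [hKdef]
      refine Set.mem_prod.2 ⟨?_, ?_⟩
      · rwa [Metric.mem_closedBall, dist_eq_norm]
      · rw [Metric.mem_closedBall, dist_zero_right, norm_smul]
        have hl1 : |l| ≤ 1 := abs_le.2 ⟨by linarith [hl.1], hl.2⟩
        have : ‖l‖ * ‖p.2‖ ≤ 1 * 1 :=
          mul_le_mul (Real.norm_eq_abs l ▸ hl1) hp2 (norm_nonneg _) one_pos.le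
        linarith
    have h1 := Xfield_snd_bound n d A B l p M ‖p.2‖ ‖p.2‖ hM0 (norm_nonneg _) (norm_nonneg _)
      (fun i j k => hMB i j k _ hmem)
      (fun i => by simpa [Real.norm_eq_abs] using norm_le_pi_norm p.2 i)
      (fun j => by simpa [Real.norm_eq_abs] using norm_le_pi_norm p.2 j)
    calc ‖(XfieldAB n d A B l p).2‖ ≤ (d:ℝ) * ((d:ℝ) * (‖p.2‖ * ‖p.2‖ * M)) := h1
      _ = b * ‖p.2‖ ^ 2 := by rw [hbdef]; ring
  · -- existence of the flow
    intro p hp1 hp2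
    -- the `1`-Lipschitz retraction onto the unit box around `(x₀, 0)`
    set r : Pt n d → Pt n d :=
      fun q => (fun j => x₀ j + cl (q.1 j - x₀ j), fun k => cl (q.2 k)) with hrdef
    set W : ℝ → Pt n d → Pt n d := fun t q => XfieldAB n d A B (clI t) (r q) with hWdef
    set Vj : ℝ × Pt n d → Pt n d := fun z => XfieldAB n d A B z.1 z.2 with hVjdef
    have hrq2_one : ∀ q : Pt n d, ∀ i, |(r q).2 i| ≤ 1 := fun q i => cl_abs_le_one _
    have hrq2_le : ∀ q : Pt n d, ∀ i, |(r q).2 i| ≤ ‖q.2‖ := fun q i =>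
      (cl_abs_le _).trans (by simpa [Real.norm_eq_abs] using norm_le_pi_norm q.2 i)
    have hrq1ball : ∀ q : Pt n d, (r q).1 ∈ Metric.closedBall x₀ 1 := by
      intro q
      rw [Metric.mem_closedBall]
      refine (dist_pi_le_iff one_pos.le).2 fun j => ?_
      rw [Real.dist_eq]
      simpa [hrdef] using cl_abs_le_one (q.1 j - x₀ j)
    have hrq2norm : ∀ q : Pt n d, ‖(r q).2‖ ≤ 1 := fun q =>
      (pi_norm_le_iff_of_nonneg one_pos.le).2 fun i => by
        simpa [Real.norm_eq_abs] using hrq2_one q i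
    have hrmem : ∀ (t : ℝ) (q : Pt n d), (((r q).1, clI t • (r q).2) : Pt n d) ∈ K := by
      intro t q
      rw [hKdef]
      refine Set.mem_prod.2 ⟨hrq1ball q, ?_⟩
      rw [Metric.mem_closedBall, dist_zero_right, norm_smul]
      have h1 : |clI t| ≤ 2 := by
        have := clI_mem t
        exact abs_le.2 ⟨by linarith [this.1], this.2⟩
      have : ‖clI t‖ * ‖(r q).2‖ ≤ 2 * 1 :=
        mul_le_mul (Real.norm_eq_abs (clI t) ▸ h1) (hrq2norm q) (norm_nonneg _) (by norm_num)
      linarith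
    -- component bounds for `W`
    have hW1 : ∀ (t : ℝ) (q : Pt n d), ‖(W t q).1‖ ≤ (d:ℝ) * (‖q.2‖ * M) := fun t q =>
      Xfield_fst_bound n d A B (clI t) (r q) M ‖q.2‖ hM0 (norm_nonneg _)
        (fun i j => hMA i j _ (hrmem t q)) (hrq2_le q)
    have hW1' : ∀ (t : ℝ) (q : Pt n d), ‖(W t q).1‖ ≤ (d:ℝ) * (1 * M) := fun t q =>
      Xfield_fst_bound n d A B (clI t) (r q) M 1 hM0 one_pos.le
        (fun i j => hMA i j _ (hrmem t q)) (hrq2_one q)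
    have hW2 : ∀ (t : ℝ) (q : Pt n d), ‖(W t q).2‖ ≤ b * ‖q.2‖ := by
      intro t q
      have h1 := Xfield_snd_bound n d A B (clI t) (r q) M 1 ‖q.2‖ hM0 one_pos.le
        (norm_nonneg _) (fun i j k => hMB i j k _ (hrmem t q)) (hrq2_one q) (hrq2_le q)
      calc ‖(W t q).2‖ ≤ (d:ℝ) * ((d:ℝ) * (1 * ‖q.2‖ * M)) := h1
        _ = b * ‖q.2‖ := by rw [hbdef]; ring
    have hW2' : ∀ (t : ℝ) (q : Pt n d), ‖(W t q).2‖ ≤ b := by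
      intro t q
      have h1 := Xfield_snd_bound n d A B (clI t) (r q) M 1 1 hM0 one_pos.le
        one_pos.le (fun i j k => hMB i j k _ (hrmem t q)) (hrq2_one q) (hrq2_one q)
      calc ‖(W t q).2‖ ≤ (d:ℝ) * ((d:ℝ) * (1 * 1 * M)) := h1
        _ = b := by rw [hbdef]; ring
    set C : ℝ := max ((d:ℝ) * (1 * M)) b with hCdef
    have hC0 : 0 ≤ C := le_trans hb0 (le_max_right _ _)
    have hWC : ∀ (t : ℝ) (q : Pt n d), ‖W t q‖ ≤ C := by
      intro t q
      rw [Prod.norm_def]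
      exact max_le ((hW1' t q).trans (le_max_left _ _)) ((hW2' t q).trans (le_max_right _ _))
    -- smoothness and global Lipschitz property of `W`
    have hg : ContDiff ℝ 1 (fun z : ℝ × Pt n d => ((z.2.1, z.1 • z.2.2) : Pt n d)) :=
      (contDiff_fst.comp contDiff_snd).prodMk (contDiff_fst.smul (contDiff_snd.comp contDiff_snd))
    have hcoord : ∀ i : Fin d, ContDiff ℝ 1 (fun z : ℝ × Pt n d => z.2.2 i) := fun i =>
      (ContinuousLinearMap.proj (R := ℝ) (φ := fun _ : Fin d => ℝ) i).contDiff.comp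
        (contDiff_snd.comp contDiff_snd)
    have hVsm : ContDiff ℝ 1 Vj := by
      refine ContDiff.prodMk ?_ ?_
      · refine contDiff_pi.2 fun j => ContDiff.neg ?_
        exact ContDiff.sum fun i _ => (hcoord i).mul (((hA i j).of_le (by exact_mod_cast le_top)).comp hg)
      · refine contDiff_pi.2 fun k => ContDiff.neg ?_
        exact ContDiff.sum fun i _ => ContDiff.sum fun j _ =>
          ((hcoord i).mul (hcoord j)).mul (((hB i j k).of_le (by exact_mod_cast le_top)).comp hg)
    set S2 : Set (ℝ × Pt n d) :=
      Icc (-1:ℝ) 2 ×ˢ (Metric.closedBall x₀ 1 ×ˢ Metric.closedBall (0 : Fin d → ℝ) 1)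
      with hS2def
    have hS2comp : IsCompact S2 := isCompact_Icc.prod
      ((isCompact_closedBall _ _).prod (isCompact_closedBall _ _))
    have hS2conv : Convex ℝ S2 := (convex_Icc _ _).prod
      ((convex_closedBall _ _).prod (convex_closedBall _ _))
    obtain ⟨L0, hL0⟩ := hS2comp.exists_bound_of_continuousOn
      ((hVsm.continuous_fderiv one_ne_zero).continuousOn (s := S2))
    set L : NNReal := Real.toNNReal L0 with hLdef
    have hlipS : LipschitzOnWith L Vj S2 := by
      refine hS2conv.lipschitzOnWith_of_nnnorm_fderiv_le
        (fun z _ => (hVsm.differentiable one_ne_zero).differentiableAt) (fun z hz => ?_)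
      rw [← NNReal.coe_le_coe, coe_nnnorm, hLdef, Real.coe_toNNReal']
      exact (hL0 z hz).trans (le_max_left _ _)
    have hmemS2 : ∀ (t : ℝ) (q : Pt n d), ((clI t, r q) : ℝ × Pt n d) ∈ S2 := by
      intro t q
      rw [hS2def]
      refine Set.mem_prod.2 ⟨clI_mem t, Set.mem_prod.2 ⟨hrq1ball q, ?_⟩⟩
      rw [Metric.mem_closedBall, dist_zero_right]
      exact hrq2norm q
    have hrlip : ∀ q q' : Pt n d, dist (r q) (r q') ≤ dist q q' := by
      intro q q'
      rw [Prod.dist_eq]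
      refine max_le ?_ ?_
      · refine (dist_pi_le_iff dist_nonneg).2 fun j => ?_
        rw [Real.dist_eq]
        have h1 : |cl (q.1 j - x₀ j) - cl (q'.1 j - x₀ j)| ≤ |q.1 j - q'.1 j| := by
          have := cl_lip (q.1 j - x₀ j) (q'.1 j - x₀ j)
          simpa [sub_sub_sub_cancel_right] using this
        calc |x₀ j + cl (q.1 j - x₀ j) - (x₀ j + cl (q'.1 j - x₀ j))|
            = |cl (q.1 j - x₀ j) - cl (q'.1 j - x₀ j)| := by ring_nf
          _ ≤ |q.1 j - q'.1 j| := h1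
          _ = dist (q.1 j) (q'.1 j) := (Real.dist_eq _ _).symm
          _ ≤ dist q.1 q'.1 := dist_le_pi_dist _ _ j
          _ ≤ dist q q' := by rw [Prod.dist_eq]; exact le_max_left _ _
      · refine (dist_pi_le_iff dist_nonneg).2 fun k => ?_
        rw [Real.dist_eq]
        calc |cl (q.2 k) - cl (q'.2 k)| ≤ |q.2 k - q'.2 k| := cl_lip _ _
          _ = dist (q.2 k) (q'.2 k) := (Real.dist_eq _ _).symm
          _ ≤ dist q.2 q'.2 := dist_le_pi_dist _ _ k
          _ ≤ dist q q' := by rw [Prod.dist_eq]; exact le_max_right _ _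
    have hWlip : ∀ t : ℝ, LipschitzWith L (W t) := by
      intro t
      refine LipschitzWith.of_dist_le_mul fun q q' => ?_
      have h := hlipS.dist_le_mul _ (hmemS2 t q) _ (hmemS2 t q')
      have hd : dist ((clI t, r q) : ℝ × Pt n d) (clI t, r q') = dist (r q) (r q') := by
        rw [Prod.dist_eq, dist_self]
        exact max_eq_right dist_nonneg
      calc dist (W t q) (W t q') ≤ (L : ℝ) * dist ((clI t, r q) : ℝ × Pt n d) (clI t, r q') := h
        _ = (L : ℝ) * dist (r q) (r q') := by rw [hd]
        _ ≤ (L : ℝ) * dist q q' := mul_le_mul_of_nonneg_left (hrlip q q') L.coe_nonneg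
    -- Picard–Lindelöf on `[-1/2, 3/2]`
    have hpl : IsPicardLindelof W (⟨1, by constructor <;> norm_num⟩ : Icc (-(1/2):ℝ) (3/2)) p
        (2*C+1).toNNReal 0 C.toNNReal L :=
      { lipschitzOnWith := fun t _ => (hWlip t).lipschitzOnWith
        continuousOn := fun x _ =>
          (hVsm.continuous.comp (clI_cont.prodMk continuous_const)).continuousOn
        norm_le := fun t _ x _ => (hWC t x).trans (le_of_eq (Real.coe_toNNReal _ hC0).symm)
        mul_max_le := by
          have h1 : max ((3:ℝ)/2 - 1) (1 - -(1/2)) = 3/2 := by norm_num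
          show (C.toNNReal : ℝ) * max ((3/2:ℝ) - 1) (1 - -(1/2))
            ≤ ((2*C+1).toNNReal : ℝ) - ((0 : NNReal) : ℝ)
          rw [h1, NNReal.coe_zero, sub_zero, Real.coe_toNNReal _ hC0,
            Real.coe_toNNReal _ (by positivity)]
          linarith }
    obtain ⟨f, hf1', hfd⟩ := hpl.exists_eq_forall_mem_Icc_hasDerivWithinAt₀
    have hf1 : f 1 = p := hf1'
    set Ic : Set ℝ := Icc (-(1/2) : ℝ) (3/2) with hIcdef
    have hfc : ContinuousOn f Ic := fun t ht => (hfd t ht).continuousWithinAt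
    have hfd1 : ∀ t ∈ Ic, HasDerivWithinAt (fun s => (f s).1) ((W t (f t)).1) Ic t := by
      intro t ht
      exact
        (ContinuousLinearMap.fst ℝ (Fin n → ℝ) (Fin d → ℝ)).hasFDerivAt.comp_hasDerivWithinAt
          t (hfd t ht)
    have hfd2 : ∀ t ∈ Ic, HasDerivWithinAt (fun s => (f s).2) ((W t (f t)).2) Ic t := by
      intro t ht
      exact
        (ContinuousLinearMap.snd ℝ (Fin n → ℝ) (Fin d → ℝ)).hasFDerivAt.comp_hasDerivWithinAt
          t (hfd t ht)
    -- backward Gronwall estimate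
    have hkey : ∀ s ∈ Icc (0:ℝ) (3/2), ‖(f (1 - s)).2‖ ≤ ‖p.2‖ * Real.exp (b * s) := by
      intro s hs
      have hcont : ContinuousOn (fun s => (f (1 - s)).2) (Icc (0:ℝ) (3/2)) :=
        continuous_snd.comp_continuousOn
          (hfc.comp ((continuous_const.sub continuous_id).continuousOn)
            (fun u hu => by
              have hu1 : (0:ℝ) ≤ u := hu.1
              have hu2 : u ≤ 3/2 := hu.2
              rw [hIcdef, Set.mem_Icc]
              exact ⟨by linarith, by linarith⟩))
      have hder : ∀ u ∈ Ico (0:ℝ) (3/2),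
          HasDerivWithinAt (fun s => (f (1 - s)).2) (-((W (1-u) (f (1-u))).2)) (Ici u) u := by
        intro u hu
        have h1u : (1 - u) ∈ Ic := ⟨by linarith [hu.2], by linarith [hu.1]⟩
        have hmaps : MapsTo (fun s' : ℝ => 1 - s') (Ici u ∩ Iio (3/2)) Ic := by
          intro s' hs'
          have h1 : u ≤ s' := hs'.1
          have h2 : s' < 3/2 := hs'.2
          have hu0 : (0:ℝ) ≤ u := hu.1
          rw [hIcdef, Set.mem_Icc]
          exact ⟨by linarith, by linarith⟩
        have hh : HasDerivWithinAt (fun s' : ℝ => 1 - s') (-1) (Ici u ∩ Iio (3/2)) u :=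
          ((hasDerivAt_id u).const_sub 1).hasDerivWithinAt
        have hcomp := (hfd (1-u) h1u).scomp u hh hmaps
        have hcomp' := (hasDerivWithinAt_inter (Iio_mem_nhds hu.2)).1 hcomp
        have := (ContinuousLinearMap.snd ℝ (Fin n → ℝ)
          (Fin d → ℝ)).hasFDerivAt.comp_hasDerivWithinAt u hcomp'
        exact this.congr_deriv (by simp)
      have h0 : ‖(f (1 - 0)).2‖ ≤ ‖p.2‖ := by simp [hf1]
      have hbnd : ∀ u ∈ Ico (0:ℝ) (3/2),
          ‖-((W (1-u) (f (1-u))).2)‖ ≤ b * ‖(f (1-u)).2‖ + 0 := by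
        intro u _
        rw [norm_neg, add_zero]
        exact hW2 (1-u) (f (1-u))
      have := norm_le_gronwallBound_of_norm_deriv_right_le hcont hder h0 hbnd s hs
      rwa [gronwallBound_ε0, sub_zero] at this
    -- forward Gronwall estimate
    have hkeyf : ∀ t ∈ Icc (1:ℝ) (3/2), ‖(f t).2‖ ≤ ‖p.2‖ * Real.exp (b * (t - 1)) := by
      intro t ht
      have hcont : ContinuousOn (fun s => (f s).2) (Icc (1:ℝ) (3/2)) :=
        continuous_snd.comp_continuousOn
          (hfc.mono (Icc_subset_Icc (by norm_num) le_rfl))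
      have hder : ∀ u ∈ Ico (1:ℝ) (3/2),
          HasDerivWithinAt (fun s => (f s).2) ((W u (f u)).2) (Ici u) u := by
        intro u hu
        have huI : u ∈ Ic := ⟨by linarith [hu.1], hu.2.le⟩
        have hsub : Ici u ∩ Iio (3/2) ⊆ Ic := by
          intro s' hs'
          have h1 : u ≤ s' := hs'.1
          have h2 : s' < 3/2 := hs'.2
          have hu1 : (1:ℝ) ≤ u := hu.1
          rw [hIcdef, Set.mem_Icc]
          exact ⟨by linarith, by linarith⟩
        exact (hasDerivWithinAt_inter (Iio_mem_nhds hu.2)).1 ((hfd2 u huI).mono hsub)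
      have h0 : ‖(f 1).2‖ ≤ ‖p.2‖ := by simp [hf1]
      have hbnd : ∀ u ∈ Ico (1:ℝ) (3/2), ‖(W u (f u)).2‖ ≤ b * ‖(f u).2‖ + 0 := by
        intro u _
        rw [add_zero]
        exact hW2 u (f u)
      have := norm_le_gronwallBound_of_norm_deriv_right_le hcont hder h0 hbnd t ht
      rwa [gronwallBound_ε0] at this
    -- uniform bound on the h-component
    have hsn : ∀ t ∈ Ic, ‖(f t).2‖ ≤ E * ‖p.2‖ := by
      intro t ht
      rcases le_total t 1 with h | h
      · have h1 := hkey (1 - t) ⟨by linarith, by linarith [ht.1]⟩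
        rw [sub_sub_cancel] at h1
        calc ‖(f t).2‖ ≤ ‖p.2‖ * Real.exp (b * (1 - t)) := h1
          _ ≤ ‖p.2‖ * E := by
              apply mul_le_mul_of_nonneg_left _ (norm_nonneg _)
              rw [hEdef]
              exact Real.exp_le_exp.2 (by nlinarith [ht.1])
          _ = E * ‖p.2‖ := mul_comm _ _
      · have h1 := hkeyf t ⟨h, ht.2⟩
        calc ‖(f t).2‖ ≤ ‖p.2‖ * Real.exp (b * (t - 1)) := h1
          _ ≤ ‖p.2‖ * E := by
              apply mul_le_mul_of_nonneg_left _ (norm_nonneg _)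
              rw [hEdef]
              exact Real.exp_le_exp.2 (by nlinarith [ht.2])
          _ = E * ‖p.2‖ := mul_comm _ _
    have hsnε : ∀ t ∈ Ic, ‖(f t).2‖ ≤ E * ε₂ := fun t ht =>
      (hsn t ht).trans (mul_le_mul_of_nonneg_left hp2 hE0.le)
    -- the x-component drifts only a little
    have hdr : ∀ t ∈ Ic, ‖(f t).1 - p.1‖ ≤ D * (E * ε₂) * (3/2) := by
      intro t ht
      have hbd : ∀ s ∈ Ic, ‖(W s (f s)).1‖ ≤ D * (E * ε₂) := by
        intro s hsI
        calc ‖(W s (f s)).1‖ ≤ (d:ℝ) * (‖(f s).2‖ * M) := hW1 s (f s)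
          _ = D * ‖(f s).2‖ := by rw [hDdef]; ring
          _ ≤ D * (E * ε₂) := mul_le_mul_of_nonneg_left (hsnε s hsI) hD0
      have h1I : (1:ℝ) ∈ Ic := by constructor <;> norm_num
      have := (convex_Icc (-(1/2):ℝ) (3/2)).norm_image_sub_le_of_norm_hasDerivWithin_le
        hfd1 hbd h1I ht
      have ht1 : ‖t - 1‖ ≤ 3/2 := by
        rw [Real.norm_eq_abs, abs_le]
        exact ⟨by linarith [ht.1], by linarith [ht.2]⟩
      calc ‖(f t).1 - p.1‖ = ‖(f t).1 - (f 1).1‖ := by rw [hf1]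
        _ ≤ D * (E * ε₂) * ‖t - 1‖ := this
        _ ≤ D * (E * ε₂) * (3/2) := by
            apply mul_le_mul_of_nonneg_left ht1 (by positivity)
    -- the solution stays in the safe box
    have hsafe1 : ∀ t ∈ Ic, ‖(f t).1 - x₀‖ ≤ 1 := by
      intro t ht
      have h1 : ‖(f t).1 - x₀‖ ≤ ‖(f t).1 - p.1‖ + ‖p.1 - x₀‖ :=
        norm_sub_le_norm_sub_add_norm_sub _ _ _
      have h2 := hdr t ht
      have hx : (E * ε₂) * (2 * (1 + 2 * D)) = 1 := by
        rw [hEε]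
        field_simp
      nlinarith [mul_nonneg hD0 (mul_nonneg hE0.le hε₂0.le), hε₂E]
    have hsafe2 : ∀ t ∈ Ic, ‖(f t).2‖ ≤ 1 := fun t ht =>
      (hsnε t ht).trans (by linarith)
    -- on the safe box, `W` agrees with the original field
    have hreq : ∀ t ∈ Ic, W t (f t) = XfieldAB n d A B t (f t) := by
      intro t ht
      have h2 : r (f t) = f t := by
        simp only [hrdef]
        have hfst : (fun j => x₀ j + cl ((f t).1 j - x₀ j)) = (f t).1 := by
          funext j
          have hj : |(f t).1 j - x₀ j| ≤ 1 := by
            have := norm_le_pi_norm ((f t).1 - x₀) j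
            simp only [Pi.sub_apply, Real.norm_eq_abs] at this
            exact this.trans (hsafe1 t ht)
          rw [cl_eq hj]; ring
        have hsnd : (fun k => cl ((f t).2 k)) = (f t).2 := by
          funext k
          have hk : |(f t).2 k| ≤ 1 := by
            have := norm_le_pi_norm ((f t).2) k
            simp only [Real.norm_eq_abs] at this
            exact this.trans (hsafe2 t ht)
          rw [cl_eq hk]
        rw [hfst, hsnd]
      have h3 : clI t = t := clI_eq ⟨by linarith [ht.1], by linarith [ht.2]⟩
      rw [hWdef]
      simp only [h3, h2]
    -- conclusion
    refine ⟨f, hf1, ?_, ?_⟩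
    · intro l hl
      have hlI : l ∈ Ic := ⟨by linarith [hl.1], by linarith [hl.2]⟩
      have h1 := (hfd l hlI).hasDerivAt
        (Icc_mem_nhds (by linarith [hl.1]) (by linarith [hl.2]))
      rwa [hreq l hlI] at h1
    · intro l hl
      have h1 := hkey (1 - l) ⟨by linarith [hl.2], by linarith [hl.1]⟩
      rw [sub_sub_cancel] at h1
      calc ‖(f l).2‖ ≤ ‖p.2‖ * Real.exp (b * (1 - l)) := h1
        _ = Real.exp ((1 - l) * 1 * b) * ‖p.2‖ := by
            rw [mul_comm, mul_one, mul_comm (1 - l) b]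
end
end
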